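/- arXiv:1605.02298 — 2 statements merged into one kernel-verified Lean document; each statement's English description precedes it below -/
import Mathlib

section
/- Let r ≥ 2 and n ≥ 0 be integers, and write (1 + x + x^2 + ... + x^{r-2})^n = h_0(x^r) + x·h_1(x^r) + ... + x^{r-1}·h_{r-1}(x^r), where h_0, ..., h_{r-1} are the r-sections of the left-hand side. Then each h_j(x) has only real roots. -/
open Polynomial Finset

/-- A real polynomial has only real roots: the number of real roots
(with multiplicity) equals its degree. (The zero polynomial counts.) -/
def RealRooted (p : Polynomial ℝ) : Prop :=
  p.roots.card = p.natDegree

/-- The list of real roots of `p`, sorted in increasing order. -/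
noncomputable def rootList (p : Polynomial ℝ) : List ℝ :=
  p.roots.sort (· ≤ ·)

/-- `Interlaces g f` means `g ≼ f`: both are real-rooted with positive leading
coefficients, `deg f ∈ {deg g, deg g + 1}`, and the roots alternate
(`v_n ≤ u_n ≤ v_{n-1} ≤ ⋯ ≤ v_1 ≤ u_1`, resp. `u_n ≤ v_{n-1} ≤ ⋯ ≤ v_1 ≤ u_1`,
indexed in decreasing order). The zero polynomial interlaces and is
interlaced by everything, by convention. -/
def Interlaces (g f : Polynomial ℝ) : Prop :=
  g = 0 ∨ f = 0 ∨
    (RealRooted f ∧ RealRooted g ∧ 0 < f.leadingCoeff ∧ 0 < g.leadingCoeff ∧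
      ((f.natDegree = g.natDegree ∧
          (∀ i < f.natDegree, (rootList g).getD i 0 ≤ (rootList f).getD i 0) ∧
          (∀ i, i + 1 < f.natDegree →
            (rootList f).getD i 0 ≤ (rootList g).getD (i + 1) 0)) ∨
       (f.natDegree = g.natDegree + 1 ∧
          (∀ i < g.natDegree, (rootList f).getD i 0 ≤ (rootList g).getD i 0) ∧
          (∀ i, i + 1 < f.natDegree →
            (rootList g).getD i 0 ≤ (rootList f).getD (i + 1) 0))))

/-- All coefficients of `p` are nonnegative. -/
def NonnegCoeffs (p : Polynomial ℝ) : Prop :=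
  ∀ k, 0 ≤ p.coeff k

open Polynomial Finset Complex

noncomputable section SectorMachinery

/-- unit vector at angle θ -/
def cis' (θ : ℝ) : ℂ := Complex.exp (θ * Complex.I)

lemma cis'_mul (a b : ℝ) : cis' a * cis' b = cis' (a + b) := by
  rw [cis', cis', cis', ← Complex.exp_add]; congr 1; push_cast; ring

lemma cis'_re (θ : ℝ) : (cis' θ).re = Real.cos θ := Complex.exp_ofReal_mul_I_re θ

lemma cis'_im (θ : ℝ) : (cis' θ).im = Real.sin θ := Complex.exp_ofReal_mul_I_im θ

lemma abs_cis' (θ : ℝ) : ‖cis' θ‖ = 1 := Complex.norm_exp_ofReal_mul_I θ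

lemma conj_cis' (θ : ℝ) : (starRingEnd ℂ) (cis' θ) = cis' (-θ) := by
  rw [cis', cis', ← Complex.exp_conj]; congr 1
  simp [map_mul, Complex.conj_ofReal]

lemma cis'_ne_zero (θ : ℝ) : cis' θ ≠ 0 := Complex.exp_ne_zero _

lemma ofReal_mul_cis'_im (x θ : ℝ) : ((x : ℂ) * cis' θ).im = x * Real.sin θ := by
  rw [Complex.im_ofReal_mul, cis'_im]

lemma ofReal_mul_cis'_re (x θ : ℝ) : ((x : ℂ) * cis' θ).re = x * Real.cos θ := by
  rw [Complex.re_ofReal_mul, cis'_re]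

lemma polar_mul (ρ₁ ρ₂ θ₁ θ₂ : ℝ) :
    ((ρ₁ : ℂ) * cis' θ₁) * ((ρ₂ : ℂ) * cis' θ₂) = ((ρ₁ * ρ₂ : ℝ) : ℂ) * cis' (θ₁ + θ₂) := by
  push_cast
  rw [← cis'_mul]; ring

lemma conj_polar_mul (ρ₁ ρ₂ θ₁ θ₂ : ℝ) :
    (starRingEnd ℂ) ((ρ₁ : ℂ) * cis' θ₁) * ((ρ₂ : ℂ) * cis' θ₂)
      = ((ρ₁ * ρ₂ : ℝ) : ℂ) * cis' (θ₂ - θ₁) := by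
  rw [map_mul, Complex.conj_ofReal, conj_cis', polar_mul]
  ring_nf

lemma polar_im_sign (ρ₁ ρ₂ θ₁ θ₂ : ℝ) :
    ((starRingEnd ℂ) ((ρ₁ : ℂ) * cis' θ₁) * ((ρ₂ : ℂ) * cis' θ₂)).im
      = ρ₁ * ρ₂ * Real.sin (θ₂ - θ₁) := by
  rw [conj_polar_mul, ofReal_mul_cis'_im]

/-- membership in the closed convex sector of directions `[a,b]` (for `b - a ≤ π`),
expressed by linear inequalities. -/
def InSector (a b : ℝ) (w : ℂ) : Prop :=
  0 ≤ (w * cis' (-a)).im ∧ (w * cis' (-b)).im ≤ 0 ∧ 0 ≤ (w * cis' (-((a + b) / 2))).re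

lemma inSector_zero (a b : ℝ) : InSector a b 0 := by simp [InSector]

lemma inSector_add {a b : ℝ} {u v : ℂ} (hu : InSector a b u) (hv : InSector a b v) :
    InSector a b (u + v) := by
  obtain ⟨h1, h2, h3⟩ := hu; obtain ⟨h1', h2', h3'⟩ := hv
  refine ⟨?_, ?_, ?_⟩ <;> rw [add_mul] <;> simp only [Complex.add_im, Complex.add_re] <;> linarith

lemma sin_nonpos_of_neg_pi_le {x : ℝ} (h1 : -Real.pi ≤ x) (h2 : x ≤ 0) : Real.sin x ≤ 0 := by
  have := Real.sin_nonneg_of_nonneg_of_le_pi (x := -x) (by linarith) (by linarith)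
  rw [Real.sin_neg] at this; linarith

lemma inSector_polar {a b ρ θ : ℝ} (hρ : 0 ≤ ρ) (h1 : a ≤ θ) (h2 : θ ≤ b)
    (hw : b - a ≤ Real.pi) : InSector a b ((ρ : ℂ) * cis' θ) := by
  refine ⟨?_, ?_, ?_⟩
  · rw [mul_assoc, cis'_mul, ofReal_mul_cis'_im]
    exact mul_nonneg hρ (Real.sin_nonneg_of_nonneg_of_le_pi (by linarith) (by linarith))
  · rw [mul_assoc, cis'_mul, ofReal_mul_cis'_im]
    exact mul_nonpos_of_nonneg_of_nonpos hρ
      (sin_nonpos_of_neg_pi_le (by linarith) (by linarith))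
  · rw [mul_assoc, cis'_mul, ofReal_mul_cis'_re]
    refine mul_nonneg hρ (Real.cos_nonneg_of_mem_Icc ⟨by linarith [Real.pi_pos], by linarith⟩)

lemma inSector_smul_rot {a b α s : ℝ} {w : ℂ} (hs : 0 ≤ s) (h : InSector a b w) :
    InSector (a + α) (b + α) (((s : ℂ) * cis' α) * w) := by
  obtain ⟨h1, h2, h3⟩ := h
  have key : ∀ c : ℝ, ((s : ℂ) * cis' α) * w * cis' (-(c + α)) = (s : ℂ) * (w * cis' (-c)) := by
    intro c
    have h' : cis' α * cis' (-(c+α)) = cis' (-c) := by rw [cis'_mul]; ring_nf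
    calc ((s : ℂ) * cis' α) * w * cis' (-(c + α))
        = (s : ℂ) * (w * (cis' α * cis' (-(c+α)))) := by ring
      _ = (s : ℂ) * (w * cis' (-c)) := by rw [h']
  refine ⟨?_, ?_, ?_⟩
  · rw [key a, Complex.im_ofReal_mul]; positivity
  · rw [key b, Complex.im_ofReal_mul]; exact mul_nonpos_of_nonneg_of_nonpos hs h2
  · have h2' : (a + α + (b + α)) / 2 = (a+b)/2 + α := by ring
    rw [h2', key ((a+b)/2), Complex.re_ofReal_mul]; positivity

/-- extraction of polar form from sector membership, for nonzero `w` and width < π. -/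
lemma inSector_polar_form {a b : ℝ} {w : ℂ} (hw : w ≠ 0) (hab : b - a < Real.pi)
    (hab' : a ≤ b) (h : InSector a b w) :
    ∃ θ : ℝ, a ≤ θ ∧ θ ≤ b ∧ w = ((‖w‖ : ℝ) : ℂ) * cis' θ := by
  obtain ⟨h1, h2, h3⟩ := h
  set m := (a + b) / 2 with hm
  set u := w * cis' (-m) with hu
  have hu0 : u ≠ 0 := mul_ne_zero hw (cis'_ne_zero _)
  have habs : ‖u‖ = ‖w‖ := by
    rw [hu, norm_mul, abs_cis', mul_one]
  set ψ := Complex.arg u with hψ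
  have hupolar : u = ((‖w‖ : ℝ) : ℂ) * cis' ψ := by
    rw [← habs, hψ, cis']
    exact (Complex.norm_mul_exp_arg_mul_I u).symm
  have hψ1 : -Real.pi < ψ := Complex.neg_pi_lt_arg u
  have hψ2 : ψ ≤ Real.pi := Complex.arg_le_pi u
  have habspos : 0 < ‖w‖ := by
    exact norm_pos_iff.mpr hw
  have hre : 0 ≤ Real.cos ψ := by
    have he : u.re = ‖w‖ * Real.cos ψ := by rw [hupolar, ofReal_mul_cis'_re]
    nlinarith [h3, he]
  have hψl : -(Real.pi/2) ≤ ψ := by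
    by_contra hc; push_neg at hc
    have : Real.cos ψ < 0 := by
      rw [← Real.cos_neg]
      exact Real.cos_neg_of_pi_div_two_lt_of_lt (by linarith) (by linarith [Real.pi_pos])
    linarith
  have hψr : ψ ≤ Real.pi/2 := by
    by_contra hc; push_neg at hc
    have : Real.cos ψ < 0 :=
      Real.cos_neg_of_pi_div_two_lt_of_lt (by linarith) (by linarith [Real.pi_pos])
    linarith
  have hwpolar : w = ((‖w‖ : ℝ) : ℂ) * cis' (m + ψ) := by
    have hw' : w = u * cis' m := by
      rw [hu, mul_assoc, cis'_mul]
      simp [cis']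
    calc w = u * cis' m := hw'
      _ = (((‖w‖ : ℝ) : ℂ) * cis' ψ) * cis' m := by rw [← hupolar]
      _ = ((‖w‖ : ℝ) : ℂ) * cis' (m + ψ) := by
          rw [mul_assoc, cis'_mul, add_comm ψ m]
  have him1 : (w * cis' (-a)).im = ‖w‖ * Real.sin (m + ψ - a) := by
    conv_lhs => rw [hwpolar]
    rw [mul_assoc, cis'_mul, ofReal_mul_cis'_im,
      show m + ψ + -a = m + ψ - a by ring]
  have him2 : (w * cis' (-b)).im = ‖w‖ * Real.sin (m + ψ - b) := by
    conv_lhs => rw [hwpolar]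
    rw [mul_assoc, cis'_mul, ofReal_mul_cis'_im,
      show m + ψ + -b = m + ψ - b by ring]
  have hma : m - a = (b - a) / 2 := by rw [hm]; ring
  have hmb : m - b = -((b - a) / 2) := by rw [hm]; ring
  refine ⟨m + ψ, ?_, ?_, hwpolar⟩
  · -- a ≤ m + ψ
    have hs1 : 0 ≤ Real.sin (m + ψ - a) := by nlinarith [h1, him1]
    by_contra hc; push_neg at hc
    have hlt : m + ψ - a < 0 := by linarith
    have hgt : -Real.pi < m + ψ - a := by
      have : 0 ≤ m - a := by rw [hma]; linarith
      linarith
    have := Real.sin_neg_of_neg_of_neg_pi_lt hlt hgt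
    linarith
  · -- m + ψ ≤ b
    have hs2 : Real.sin (m + ψ - b) ≤ 0 := by nlinarith [h2, him2]
    by_contra hc; push_neg at hc
    have hgt : 0 < m + ψ - b := by linarith
    have hlt : m + ψ - b < Real.pi := by
      have : m - b ≤ 0 := by rw [hmb]; linarith
      linarith [Real.pi_pos]
    have := Real.sin_pos_of_pos_of_lt_pi hgt hlt
    linarith

/-- a polar anchor plus a sector element is nonzero (width < π). -/
lemma polar_add_sector_ne_zero {a b ρ θ : ℝ} {v : ℂ} (hρ : 0 < ρ) (h1 : a ≤ θ) (h2 : θ ≤ b)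
    (hab : b - a < Real.pi) (hv : InSector a b v) :
    ((ρ : ℂ) * cis' θ + v) ≠ 0 := by
  intro hzero
  have hre : (((ρ : ℂ) * cis' θ + v) * cis' (-((a+b)/2))).re = 0 := by rw [hzero]; simp
  rw [add_mul] at hre
  have hterm : (((ρ:ℂ) * cis' θ) * cis' (-((a+b)/2))).re = ρ * Real.cos (θ - (a+b)/2) := by
    rw [mul_assoc, cis'_mul, ofReal_mul_cis'_re,
      show θ + -((a+b)/2) = θ - (a+b)/2 by ring]
  have hcos : 0 < Real.cos (θ - (a+b)/2) := by
    apply Real.cos_pos_of_mem_Ioo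
    constructor
    · nlinarith
    · nlinarith
  have hv3 := hv.2.2
  rw [Complex.add_re, hterm] at hre
  nlinarith

/-- combined: anchor + sector = strict polar element of the sector. -/
lemma polar_add_sector {a b ρ θ : ℝ} {v : ℂ} (hρ : 0 < ρ) (h1 : a ≤ θ) (h2 : θ ≤ b)
    (hab : b - a < Real.pi) (hv : InSector a b v) :
    ∃ ρ' θ' : ℝ, 0 < ρ' ∧ a ≤ θ' ∧ θ' ≤ b ∧ ((ρ : ℂ) * cis' θ + v) = ((ρ' : ℝ) : ℂ) * cis' θ' := by
  have hne := polar_add_sector_ne_zero hρ h1 h2 hab hv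
  have hmem : InSector a b ((ρ : ℂ) * cis' θ + v) :=
    inSector_add (inSector_polar hρ.le h1 h2 hab.le) hv
  obtain ⟨θ', ha', hb', hpol⟩ := inSector_polar_form hne hab (le_trans h1 h2) hmem
  exact ⟨‖(ρ : ℂ) * cis' θ + v‖, θ', norm_pos_iff.mpr hne, ha', hb', hpol⟩

/-- comparison: if the "cross product" is ≤ 0 and the angle difference is in (-π, π),
then the angles are ordered. -/
lemma angle_le_of_im_nonpos {ρ₁ ρ₂ θ₁ θ₂ : ℝ} (h1 : 0 < ρ₁) (h2 : 0 < ρ₂)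
    (hd1 : -Real.pi < θ₂ - θ₁) (hd2 : θ₂ - θ₁ < Real.pi)
    (him : ((starRingEnd ℂ) ((ρ₁ : ℂ) * cis' θ₁) * ((ρ₂ : ℂ) * cis' θ₂)).im ≤ 0) :
    θ₂ ≤ θ₁ := by
  rw [polar_im_sign] at him
  by_contra hc; push_neg at hc
  have hs := Real.sin_pos_of_pos_of_lt_pi (by linarith : 0 < θ₂ - θ₁) hd2
  nlinarith [mul_pos (mul_pos h1 h2) hs]

lemma im_conj_polar_nonpos {ρ₁ ρ₂ θ₁ θ₂ : ℝ} (h1 : 0 ≤ ρ₁) (h2 : 0 ≤ ρ₂)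
    (hd1 : -Real.pi ≤ θ₂ - θ₁) (hd2 : θ₂ - θ₁ ≤ 0) :
    ((starRingEnd ℂ) ((ρ₁ : ℂ) * cis' θ₁) * ((ρ₂ : ℂ) * cis' θ₂)).im ≤ 0 := by
  rw [polar_im_sign]
  exact mul_nonpos_of_nonneg_of_nonpos (mul_nonneg h1 h2) (sin_nonpos_of_neg_pi_le hd1 hd2)

lemma im_conj_polar_nonneg {ρ₁ ρ₂ θ₁ θ₂ : ℝ} (h1 : 0 ≤ ρ₁) (h2 : 0 ≤ ρ₂)
    (hd1 : 0 ≤ θ₂ - θ₁) (hd2 : θ₂ - θ₁ ≤ Real.pi) :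
    0 ≤ ((starRingEnd ℂ) ((ρ₁ : ℂ) * cis' θ₁) * ((ρ₂ : ℂ) * cis' θ₂)).im := by
  rw [polar_im_sign]
  exact mul_nonneg (mul_nonneg h1 h2) (Real.sin_nonneg_of_nonneg_of_le_pi hd1 hd2)

lemma im_conj_self (w : ℂ) : ((starRingEnd ℂ) w * w).im = 0 := by
  simp [Complex.mul_im]
  ring

end SectorMachinery
section RealRootedCriterion
open Polynomial Complex

lemma splits_of_roots_real :
    ∀ (d : ℕ) (p : Polynomial ℝ), p.natDegree = d →
      (∀ ζ : ℂ, Polynomial.aeval ζ p = 0 → ζ.im = 0) →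
      p.Splits := by
  intro d
  induction d using Nat.strong_induction_on with
  | _ d IH =>
    intro p hdeg H
    rcases Nat.eq_zero_or_pos d with hd0 | hdpos
    · exact Polynomial.Splits.of_natDegree_le_one (by omega)
    · have hp0 : p ≠ 0 := fun h => by simp [h] at hdeg; omega
      set q : Polynomial ℂ := p.map (algebraMap ℝ ℂ) with hq
      have hq0 : q ≠ 0 := by
        rw [hq]
        exact (Polynomial.map_ne_zero_iff (algebraMap ℝ ℂ).injective).2 hp0
      have hqdeg : 0 < q.degree := by
        rw [hq, Polynomial.degree_map_eq_of_injective (algebraMap ℝ ℂ).injective]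
        exact Polynomial.natDegree_pos_iff_degree_pos.1 (by omega)
      obtain ⟨ζ, hζ⟩ := Complex.exists_root hqdeg
      have haev : Polynomial.aeval ζ p = 0 := by
        rw [Polynomial.aeval_def, ← Polynomial.eval_map]; exact hζ
      have him : ζ.im = 0 := H ζ haev
      set x : ℝ := ζ.re with hx
      have hζx : ζ = (x : ℂ) := by
        apply Complex.ext <;> simp [hx, him]
      have hroot : p.IsRoot x := by
        have h1 : Polynomial.aeval ((x : ℂ)) p = 0 := by rw [← hζx]; exact haev
        have h2 : (algebraMap ℝ ℂ) (p.eval x) = 0 := by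
          rw [← Polynomial.eval₂_at_apply, ← Polynomial.aeval_def]
          exact h1
        exact (map_eq_zero_iff _ (algebraMap ℝ ℂ).injective).1 h2
      obtain ⟨p₁, hp₁⟩ := (Polynomial.dvd_iff_isRoot.2 hroot)
      have hp₁0 : p₁ ≠ 0 := fun h => hp0 (by rw [hp₁, h, mul_zero])
      have hXC : (Polynomial.X - Polynomial.C x) ≠ (0 : Polynomial ℝ) :=
        Polynomial.X_sub_C_ne_zero x
      have hdeg' : p.natDegree = p₁.natDegree + 1 := by
        rw [hp₁, Polynomial.natDegree_mul hXC hp₁0, Polynomial.natDegree_X_sub_C]; ring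
      have H₁ : ∀ ζ : ℂ, Polynomial.aeval ζ p₁ = 0 → ζ.im = 0 := by
        intro ζ' hζ'
        apply H ζ'
        rw [hp₁, map_mul, hζ', mul_zero]
      have hsp₁ := IH p₁.natDegree (by omega) p₁ rfl H₁
      rw [hp₁]
      exact (Polynomial.Splits.X_sub_C _).mul hsp₁

lemma realRooted_of_no_nonreal_roots {p : Polynomial ℝ}
    (H : ∀ ζ : ℂ, Polynomial.aeval ζ p = 0 → ζ.im = 0) :
    p.roots.card = p.natDegree := by
  rw [← Polynomial.splits_iff_card_roots]
  exact splits_of_roots_real p.natDegree p rfl H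

/-- conjugation symmetry of aeval for real polynomials -/
lemma aeval_conj (p : Polynomial ℝ) (z : ℂ) :
    Polynomial.aeval ((starRingEnd ℂ) z) p = (starRingEnd ℂ) (Polynomial.aeval z p) := by
  rw [Polynomial.aeval_def, Polynomial.aeval_def, Polynomial.eval₂_eq_sum_range,
    Polynomial.eval₂_eq_sum_range, map_sum]
  congr 1; ext i
  simp [map_mul, map_pow, Complex.conj_ofReal]

/-- it suffices to exclude roots in the open upper half plane -/
lemma realRooted_of_no_UHP_roots {p : Polynomial ℝ}
    (H : ∀ ζ : ℂ, 0 < ζ.im → Polynomial.aeval ζ p ≠ 0) :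
    p.roots.card = p.natDegree := by
  apply realRooted_of_no_nonreal_roots
  intro ζ hζ
  by_contra him
  rcases lt_trichotomy ζ.im 0 with hneg | hzero | hpos
  · have h2 : 0 < ((starRingEnd ℂ) ζ).im := by simpa using by linarith
    apply H _ h2
    rw [aeval_conj, hζ, map_zero]
  · exact him hzero
  · exact H ζ hpos hζ

lemma antitone_of_consecutive {r : ℕ} {θ : ℕ → ℝ}
    (h : ∀ j, j + 1 ≤ r - 1 → θ (j+1) ≤ θ j) :
    ∀ i j, i ≤ j → j ≤ r - 1 → θ j ≤ θ i := by
  intro i j hij hj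
  induction j, hij using Nat.le_induction with
  | base => exact le_refl _
  | succ k hik IH => exact le_trans (h k hj) (IH (by omega))
section Sections
open Polynomial Finset

noncomputable def gpoly (r : ℕ) : Polynomial ℝ := ∑ i ∈ Finset.range (r-1), Polynomial.X ^ i

noncomputable def sect (r m j : ℕ) : Polynomial ℝ :=
  ∑ k ∈ Finset.range (m*(r-2)+1),
    Polynomial.C (((gpoly r)^m).coeff (r*k+j)) * Polynomial.X ^ k

lemma coeff_sum_C_mul_X (f : ℕ → ℝ) (n k : ℕ) :
    (∑ i ∈ Finset.range n, Polynomial.C (f i) * Polynomial.X ^ i).coeff k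
      = if k < n then f k else 0 := by
  rw [Polynomial.finset_sum_coeff]
  have hstep : ∀ i ∈ Finset.range n,
      (Polynomial.C (f i) * Polynomial.X ^ i).coeff k = if k = i then f i else 0 := by
    intro i _
    rw [Polynomial.coeff_C_mul, Polynomial.coeff_X_pow, mul_ite, mul_one, mul_zero]
  rw [Finset.sum_congr rfl hstep, Finset.sum_ite_eq (Finset.range n) k f]
  simp [Finset.mem_range]

lemma natDegree_gpoly_pow (r m : ℕ) (hr : 2 ≤ r) :
    ((gpoly r)^m).natDegree ≤ m*(r-2) := by
  have h1 : (gpoly r).natDegree ≤ r - 2 := by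
    apply Polynomial.natDegree_sum_le_of_forall_le
    intro i hi
    rw [Polynomial.natDegree_X_pow]
    have := Finset.mem_range.1 hi
    omega
  calc ((gpoly r)^m).natDegree ≤ m * (gpoly r).natDegree := Polynomial.natDegree_pow_le
    _ ≤ m * (r-2) := Nat.mul_le_mul_left m h1

lemma coeff_sect (r : ℕ) (hr : 2 ≤ r) (m j k : ℕ) :
    (sect r m j).coeff k = ((gpoly r)^m).coeff (r*k+j) := by
  rw [sect, coeff_sum_C_mul_X]
  by_cases hk : k < m*(r-2)+1
  · rw [if_pos hk]
  · rw [if_neg hk]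
    symm
    apply Polynomial.coeff_eq_zero_of_natDegree_lt
    have h1 := natDegree_gpoly_pow r m hr
    have h2 : k ≤ r * k := Nat.le_mul_of_pos_left k (by omega)
    omega

lemma coeff_mul_gpoly (r : ℕ) (p : Polynomial ℝ) (N : ℕ) :
    (p * gpoly r).coeff N
      = ∑ i ∈ Finset.range (r-1), if i ≤ N then p.coeff (N-i) else 0 := by
  rw [gpoly, Finset.mul_sum, Polynomial.finset_sum_coeff]
  exact Finset.sum_congr rfl (fun i _ => Polynomial.coeff_mul_X_pow' p i N)

lemma sect_succ_low (r : ℕ) (hr : 2 ≤ r) (m j : ℕ) (hj : j ≤ r-2) :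
    sect r (m+1) j = (∑ i ∈ Finset.range (j+1), sect r m i)
      + Polynomial.X * ∑ i ∈ Finset.Icc (j+2) (r-1), sect r m i := by
  ext k
  rw [coeff_sect r hr, pow_succ, coeff_mul_gpoly]
  rw [Polynomial.coeff_add, Polynomial.finset_sum_coeff]
  have hsplit : j + 1 ≤ r - 1 := by omega
  rw [← Finset.sum_range_add_sum_Ico _ hsplit]
  congr 1
  · -- low part
    calc ∑ i ∈ Finset.range (j+1), (if i ≤ r*k+j then ((gpoly r)^m).coeff (r*k+j-i) else 0)
        = ∑ i ∈ Finset.range (j+1), ((gpoly r)^m).coeff (r*k + (j+1-1-i)) := by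
          apply Finset.sum_congr rfl
          intro i hi
          have hi' := Finset.mem_range.1 hi
          rw [if_pos (by omega : i ≤ r*k+j)]
          congr 1
          omega
      _ = ∑ i ∈ Finset.range (j+1), ((gpoly r)^m).coeff (r*k + i) :=
          Finset.sum_range_reflect (fun i => ((gpoly r)^m).coeff (r*k + i)) (j+1)
      _ = ∑ i ∈ Finset.range (j+1), (sect r m i).coeff k := by
          apply Finset.sum_congr rfl
          intro i _
          rw [coeff_sect r hr]
  · -- high part
    cases k with
    | zero =>
      rw [Polynomial.mul_coeff_zero]
      simp only [Polynomial.coeff_X_zero, zero_mul]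
      apply Finset.sum_eq_zero
      intro i hi
      rw [Finset.mem_Ico] at hi
      rw [if_neg (by omega)]
    | succ k' =>
      rw [Polynomial.coeff_X_mul, Polynomial.finset_sum_coeff]
      have hmul : r*(k'+1) = r*k' + r := by ring
      calc ∑ i ∈ Finset.Ico (j+1) (r-1),
            (if i ≤ r*(k'+1)+j then ((gpoly r)^m).coeff (r*(k'+1)+j-i) else 0)
          = ∑ i ∈ Finset.Ico (j+1) (r-1), ((gpoly r)^m).coeff (r*k' + (r+j-i)) := by
            apply Finset.sum_congr rfl
            intro i hi
            rw [Finset.mem_Ico] at hi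
            rw [if_pos (by omega : i ≤ r*(k'+1)+j)]
            congr 1
            omega
        _ = ∑ i ∈ Finset.Icc (j+2) (r-1), ((gpoly r)^m).coeff (r*k' + i) := by
            apply Finset.sum_nbij' (i := fun i => r+j-i) (j := fun i => r+j-i)
            · intro a ha; rw [Finset.mem_Ico] at ha; rw [Finset.mem_Icc]; omega
            · intro a ha; rw [Finset.mem_Icc] at ha; rw [Finset.mem_Ico]; omega
            · intro a ha; rw [Finset.mem_Ico] at ha; omega
            · intro a ha; rw [Finset.mem_Icc] at ha; omega
            · intro a ha; rfl
        _ = ∑ i ∈ Finset.Icc (j+2) (r-1), (sect r m i).coeff k' := by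
            apply Finset.sum_congr rfl
            intro i _
            rw [coeff_sect r hr]

lemma sect_succ_top (r : ℕ) (hr : 2 ≤ r) (m : ℕ) :
    sect r (m+1) (r-1) = ∑ i ∈ Finset.Icc 1 (r-1), sect r m i := by
  ext k
  rw [coeff_sect r hr, pow_succ, coeff_mul_gpoly, Polynomial.finset_sum_coeff]
  calc ∑ i ∈ Finset.range (r-1),
        (if i ≤ r*k+(r-1) then ((gpoly r)^m).coeff (r*k+(r-1)-i) else 0)
      = ∑ i ∈ Finset.range (r-1), ((gpoly r)^m).coeff (r*k + (r-1-i)) := by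
        apply Finset.sum_congr rfl
        intro i hi
        rw [Finset.mem_range] at hi
        rw [if_pos (by omega : i ≤ r*k+(r-1))]
        congr 1
        omega
    _ = ∑ i ∈ Finset.Icc 1 (r-1), ((gpoly r)^m).coeff (r*k + i) := by
        apply Finset.sum_nbij' (i := fun i => r-1-i) (j := fun i => r-1-i)
        · intro a ha; rw [Finset.mem_range] at ha; rw [Finset.mem_Icc]; omega
        · intro a ha; rw [Finset.mem_Icc] at ha; rw [Finset.mem_range]; omega
        · intro a ha; rw [Finset.mem_range] at ha; omega
        · intro a ha; rw [Finset.mem_Icc] at ha; omega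
        · intro a ha; rfl
    _ = ∑ i ∈ Finset.Icc 1 (r-1), (sect r m i).coeff k := by
        apply Finset.sum_congr rfl
        intro i _
        rw [coeff_sect r hr]

lemma coeff_zero_gpoly_pow (r m : ℕ) (hr : 2 ≤ r) : ((gpoly r)^m).coeff 0 = 1 := by
  rw [Polynomial.coeff_zero_eq_eval_zero, Polynomial.eval_pow]
  have : (gpoly r).eval 0 = 1 := by
    rw [gpoly, Polynomial.eval_finset_sum]
    rw [Finset.sum_eq_single 0]
    · simp
    · intro i _ hi; simp [zero_pow hi]
    · intro habs; exact absurd (Finset.mem_range.2 (by omega)) habs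
  rw [this, one_pow]

lemma sect_zero_ne_zero (r m : ℕ) (hr : 2 ≤ r) : sect r m 0 ≠ 0 := by
  intro hc
  have h1 : (sect r m 0).coeff 0 = 0 := by rw [hc]; simp
  rw [coeff_sect r hr] at h1
  have h2 : r * 0 + 0 = 0 := by omega
  rw [h2, coeff_zero_gpoly_pow r m hr] at h1
  exact one_ne_zero h1

lemma sect_zero_sect (r j : ℕ) (hr : 2 ≤ r) (hj : 1 ≤ j) : sect r 0 j = 0 := by
  ext k
  rw [coeff_sect r hr, pow_zero, Polynomial.coeff_one]
  simp only [Polynomial.coeff_zero]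
  rw [if_neg (by omega)]

lemma sect_zero_zero (r : ℕ) (hr : 2 ≤ r) : sect r 0 0 = 1 := by
  ext k
  rw [coeff_sect r hr, pow_zero, Polynomial.coeff_one, Polynomial.coeff_one]
  by_cases hk : k = 0
  · subst hk; simp
  · have hle : k ≤ r * k := Nat.le_mul_of_pos_left k (by omega)
    rw [if_neg (by omega), if_neg (by omega)]

end Sections
section MainInduction
open Polynomial Finset Complex

lemma arg_pos_of_im_pos {z : ℂ} (hz : 0 < z.im) : 0 < z.arg := by
  have h1 := Complex.neg_pi_lt_arg z
  have hz0 : z ≠ 0 := fun h => by simp [h] at hz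
  have hsin : 0 < Real.sin z.arg := by
    rw [Complex.sin_arg]
    exact div_pos hz (norm_pos_iff.mpr hz0)
  by_contra hc; push_neg at hc
  have := sin_nonpos_of_neg_pi_le (le_of_lt h1) hc
  linarith

lemma arg_lt_pi_of_im_pos {z : ℂ} (hz : 0 < z.im) : z.arg < Real.pi := by
  have h2 := Complex.arg_le_pi z
  have hz0 : z ≠ 0 := fun h => by simp [h] at hz
  have hsin : 0 < Real.sin z.arg := by
    rw [Complex.sin_arg]
    exact div_pos hz (norm_pos_iff.mpr hz0)
  rcases lt_or_eq_of_le h2 with h | h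
  · exact h
  · rw [h, Real.sin_pi] at hsin; linarith

lemma z_polar (z : ℂ) : z = ((‖z‖ : ℝ) : ℂ) * cis' z.arg :=
  (Complex.norm_mul_exp_arg_mul_I z).symm

/-- The inductive invariant: at height `m`, the evaluations of the sections at `z`
have decreasing arguments, all within a window of width `arg z`. -/
def SInv (r : ℕ) (z : ℂ) (m : ℕ) : Prop :=
  ∃ θ ρ : ℕ → ℝ,
    (∀ i j, i ≤ j → j ≤ r-1 → θ j ≤ θ i) ∧
    (θ 0 - θ (r-1) ≤ z.arg) ∧
    (∀ j, j ≤ r-1 → 0 ≤ ρ j) ∧ (0 < ρ 0) ∧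
    (∀ j, j ≤ r-1 → Polynomial.aeval z (sect r m j) = ((ρ j : ℝ) : ℂ) * cis' (θ j)) ∧
    (∀ j, j ≤ r-1 → sect r m j ≠ 0 → 0 < ρ j)

lemma SInv_zero (r : ℕ) (z : ℂ) (hr : 2 ≤ r) (hz : 0 < z.im) : SInv r z 0 := by
  refine ⟨fun _ => 0, fun j => if j = 0 then 1 else 0, ?_, ?_, ?_, ?_, ?_, ?_⟩
  · intro i j _ _; exact le_refl _
  · simpa using le_of_lt (arg_pos_of_im_pos hz)
  · intro j _; by_cases h : j = 0 <;> simp [h]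
  · simp
  · intro j hj
    by_cases hj0 : j = 0
    · subst hj0
      rw [sect_zero_zero r hr]
      simp [cis']
    · rw [sect_zero_sect r j hr (by omega)]
      simp [hj0]
  · intro j hj hne
    by_cases hj0 : j = 0
    · simp [hj0]
    · exact absurd (sect_zero_sect r j hr (by omega)) hne

lemma aeval_sect_low (r : ℕ) (z : ℂ) (hr : 2 ≤ r) (m j : ℕ) (hj : j ≤ r-2) :
    Polynomial.aeval z (sect r (m+1) j)
      = (∑ i ∈ Finset.range (j+1), Polynomial.aeval z (sect r m i))
        + z * ∑ i ∈ Finset.Icc (j+2) (r-1), Polynomial.aeval z (sect r m i) := by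
  rw [sect_succ_low r hr m j hj]
  rw [map_add, map_sum, map_mul, map_sum, Polynomial.aeval_X]

lemma aeval_sect_top (r : ℕ) (z : ℂ) (hr : 2 ≤ r) (m : ℕ) :
    Polynomial.aeval z (sect r (m+1) (r-1))
      = ∑ i ∈ Finset.Icc 1 (r-1), Polynomial.aeval z (sect r m i) := by
  rw [sect_succ_top r hr m, map_sum]

lemma sum_range_shift (f : ℕ → ℂ) (n : ℕ) :
    ∑ i ∈ Finset.range n, f (i+1) = ∑ i ∈ Finset.Icc 1 n, f i := by
  apply Finset.sum_nbij' (i := fun i => i+1) (j := fun i => i-1)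
  · intro a ha; rw [Finset.mem_range] at ha; rw [Finset.mem_Icc]; omega
  · intro a ha; rw [Finset.mem_Icc] at ha; rw [Finset.mem_range]; omega
  · intro a _; omega
  · intro a ha; rw [Finset.mem_Icc] at ha; omega
  · intro a ha; rfl

lemma SInv_step (r : ℕ) (z : ℂ) (hr : 2 ≤ r) (hz : 0 < z.im) (m : ℕ)
    (h : SInv r z m) : SInv r z (m+1) := by
  obtain ⟨θ, ρ, hmono, hspread, hρnn, hρ0, hval, hne⟩ := h
  set α := z.arg with hα
  have hα0 : 0 < α := arg_pos_of_im_pos hz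
  have hαπ : α < Real.pi := arg_lt_pi_of_im_pos hz
  have hz0 : z ≠ 0 := fun h => by simp [h] at hz
  have habs : 0 < ‖z‖ := norm_pos_iff.mpr hz0
  have hzpolar : z = ((‖z‖ : ℝ) : ℂ) * cis' α := z_polar z
  set w : ℕ → ℂ := fun i => ((ρ i : ℝ) : ℂ) * cis' (θ i) with hwdef
  have hw_eq : ∀ i, w i = ((ρ i : ℝ) : ℂ) * cis' (θ i) := fun i => by simp only [hwdef]
  have hzw : ∀ i, z * w i = (((‖z‖ * ρ i : ℝ)) : ℂ) * cis' (θ i + α) := by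
    intro i
    rw [hw_eq i]
    conv_lhs => rw [hzpolar]
    rw [polar_mul, add_comm α (θ i)]
  set θh : ℕ → ℝ := fun i => if i ≤ r-1 then θ i else θ 0 - α with hθhdef
  have hθh_eq : ∀ i, i ≤ r-1 → θh i = θ i := by
    intro i hi; simp only [hθhdef]; rw [if_pos hi]
  have hθh_eq' : ∀ i, ¬(i ≤ r-1) → θh i = θ 0 - α := by
    intro i hi; simp only [hθhdef]; rw [if_neg hi]
  have hθh_lb : ∀ i, θ 0 - α ≤ θh i := by
    intro i
    by_cases hi : i ≤ r-1
    · rw [hθh_eq i hi]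
      have h1 := hmono i (r-1) (by omega) (le_refl _)
      linarith
    · rw [hθh_eq' i hi]
  have hθh_ub : ∀ i, θh i ≤ θ 0 := by
    intro i
    by_cases hi : i ≤ r-1
    · rw [hθh_eq i hi]; exact hmono 0 i (Nat.zero_le _) hi
    · rw [hθh_eq' i hi]; linarith
  have hθh_mono : ∀ i j, i ≤ j → θh j ≤ θh i := by
    intro i j hij
    by_cases hjr : j ≤ r-1
    · rw [hθh_eq j hjr, hθh_eq i (by omega)]
      exact hmono i j hij hjr
    · rw [hθh_eq' j hjr]
      exact hθh_lb i
  -- w i = 0 when ρ i = 0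
  have hw_zero : ∀ i, ρ i = 0 → w i = 0 := by
    intro i hi; rw [hw_eq i, hi]; simp
  by_cases hZ : ∀ i, 1 ≤ i → i ≤ r-1 → ρ i = 0
  · -- degenerate case: all sections above index 0 vanish
    have hsect0 : ∀ i, 1 ≤ i → i ≤ r-1 → sect r m i = 0 := by
      intro i h1 h2
      by_contra hc
      exact absurd (hZ i h1 h2) (ne_of_gt (hne i h2 hc))
    have hw0 : ∀ i, 1 ≤ i → i ≤ r-1 → Polynomial.aeval z (sect r m i) = 0 := by
      intro i h1 h2
      rw [hsect0 i h1 h2, map_zero]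
    refine ⟨fun j => if j ≤ r-2 then θ 0 else θ 0 - α,
            fun j => if j ≤ r-2 then ρ 0 else 0, ?_, ?_, ?_, ?_, ?_, ?_⟩ <;> dsimp only
    · intro i j hij hj
      by_cases hi2 : i ≤ r-2 <;> by_cases hj2 : j ≤ r-2 <;>
        simp only [if_pos, if_neg, hi2, hj2, if_true, if_false] <;> first
      | linarith
      | omega
    · rw [if_pos (by omega : (0:ℕ) ≤ r-2), if_neg (by omega : ¬ (r-1 ≤ r-2))]
      simp [hα]
    · intro j _
      by_cases hj2 : j ≤ r-2 <;> simp [hj2]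
      exact le_of_lt hρ0
    · rw [if_pos (by omega : (0:ℕ) ≤ r-2)]; exact hρ0
    · intro j hj
      by_cases hj2 : j ≤ r-2
      · rw [if_pos hj2, if_pos hj2]
        rw [aeval_sect_low r z hr m j hj2]
        have h1 : ∑ i ∈ Finset.range (j+1), Polynomial.aeval z (sect r m i)
            = Polynomial.aeval z (sect r m 0) := by
          apply Finset.sum_eq_single_of_mem 0 (Finset.mem_range.2 (by omega))
          intro i hi hi0
          exact hw0 i (by omega) (by rw [Finset.mem_range] at hi; omega)
        have h2 : ∑ i ∈ Finset.Icc (j+2) (r-1), Polynomial.aeval z (sect r m i) = 0 := by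
          apply Finset.sum_eq_zero
          intro i hi
          rw [Finset.mem_Icc] at hi
          exact hw0 i (by omega) (by omega)
        rw [h1, h2, mul_zero, add_zero, hval 0 (by omega)]
      · have hj3 : j = r-1 := by omega
        rw [if_neg hj2, if_neg hj2, hj3]
        rw [aeval_sect_top r z hr m]
        rw [Finset.sum_eq_zero (fun i hi => by
          rw [Finset.mem_Icc] at hi
          exact hw0 i (by omega) (by omega))]
        simp
    · intro j hj hnez
      by_cases hj2 : j ≤ r-2
      · rw [if_pos hj2]; exact hρ0
      · exfalso
        apply hnez
        have hj3 : j = r-1 := by omega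
        rw [hj3, sect_succ_top r hr m]
        apply Finset.sum_eq_zero
        intro i hi
        rw [Finset.mem_Icc] at hi
        exact hsect0 i (by omega) (by omega)
  · -- main case
    push_neg at hZ
    obtain ⟨i0, hi01, hi0r, hi0ne⟩ := hZ
    have hi0pos : 0 < ρ i0 := lt_of_le_of_ne (hρnn i0 hi0r) (Ne.symm hi0ne)
    -- windows
    have key : ∀ j, ∃ ρθ : ℝ × ℝ, (j ≤ r-1 →
        0 < ρθ.1 ∧ (if j ≤ r-2 then θ j else θ (r-1)) ≤ ρθ.2 ∧
        ρθ.2 ≤ (if j ≤ r-2 then θh (j+2) + α else θ 1) ∧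
        Polynomial.aeval z (sect r (m+1) j) = ((ρθ.1 : ℝ) : ℂ) * cis' ρθ.2) := by
      intro j
      by_cases hj : j ≤ r-1
      · by_cases hj2 : j ≤ r-2
        · -- low case
          set a := θ j with hadef
          set b := θh (j+2) + α with hbdef
          have hba : b - a ≤ α := by
            have := hθh_mono j (j+2) (by omega)
            rw [hθh_eq j hj] at this
            simp only [hbdef, hadef]
            linarith
          have hab : a ≤ b := by
            have h1 := hθh_lb (j+2)
            have h2 := hmono 0 j (Nat.zero_le _) hj
            simp only [hbdef, hadef]
            linarith
          have hθ0mem : a ≤ θ 0 ∧ θ 0 ≤ b := by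
            constructor
            · exact hmono 0 j (Nat.zero_le _) hj
            · have := hθh_lb (j+2); simp only [hbdef]; linarith
          -- decompose
          have hsum1 : ∑ i ∈ Finset.range (j+1), Polynomial.aeval z (sect r m i)
              = w 0 + ∑ i ∈ Finset.range j, w (i+1) := by
            have e1 : (∑ i ∈ Finset.range j, Polynomial.aeval z (sect r m (i+1)))
                = ∑ i ∈ Finset.range j, w (i+1) := by
              apply Finset.sum_congr rfl
              intro i hi
              rw [Finset.mem_range] at hi
              rw [hval (i+1) (by omega), hw_eq]
            rw [Finset.sum_range_succ', e1, hval 0 (by omega), ← hw_eq 0]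
            exact add_comm _ _
          have hsum2 : ∑ i ∈ Finset.Icc (j+2) (r-1), Polynomial.aeval z (sect r m i)
              = ∑ i ∈ Finset.Icc (j+2) (r-1), w i := by
            apply Finset.sum_congr rfl
            intro i hi
            rw [Finset.mem_Icc] at hi
            rw [hval i (by omega), hw_eq]
          have hW : Polynomial.aeval z (sect r (m+1) j)
              = ((ρ 0 : ℝ) : ℂ) * cis' (θ 0)
                + ((∑ i ∈ Finset.range j, w (i+1)) + z * ∑ i ∈ Finset.Icc (j+2) (r-1), w i) := by
            rw [aeval_sect_low r z hr m j hj2, hsum1, hsum2, hw_eq 0]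
            ring
          have hsec : InSector a b
              ((∑ i ∈ Finset.range j, w (i+1)) + z * ∑ i ∈ Finset.Icc (j+2) (r-1), w i) := by
            apply inSector_add
            · apply Finset.sum_induction _ _ (fun _ _ => inSector_add) (inSector_zero a b)
              intro i hi
              rw [Finset.mem_range] at hi
              rw [hw_eq]
              apply inSector_polar (hρnn (i+1) (by omega)) _ _ (by linarith)
              · exact hmono (i+1) j (by omega) hj
              · have h1 := hmono 0 (i+1) (Nat.zero_le _) (by omega)
                linarith [hθ0mem.2]
            · rw [Finset.mul_sum]
              apply Finset.sum_induction _ _ (fun _ _ => inSector_add) (inSector_zero a b)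
              intro i hi
              rw [Finset.mem_Icc] at hi
              rw [hzw i]
              apply inSector_polar (mul_nonneg (le_of_lt habs) (hρnn i (by omega))) _ _
                (by linarith)
              · -- a ≤ θ i + α
                have h1 := hmono i (r-1) (by omega) (le_refl _)
                have h2 := hmono 0 j (Nat.zero_le _) hj
                simp only [hadef]
                linarith
              · -- θ i + α ≤ b
                have h1 := hmono (j+2) i (by omega) (by omega)
                rw [← hθh_eq (j+2) (by omega)] at h1
                simp only [hbdef]
                linarith
          obtain ⟨ρ', θ', hρ'pos, hθ'a, hθ'b, heq⟩ :=
            polar_add_sector hρ0 hθ0mem.1 hθ0mem.2 (by linarith : b - a < Real.pi) hsec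
          refine ⟨(ρ', θ'), fun _ => ?_⟩
          rw [if_pos hj2, if_pos hj2]
          exact ⟨hρ'pos, hθ'a, hθ'b, by rw [hW, heq]⟩
        · -- top case : j = r-1
          have hj3 : j = r-1 := by omega
          set a := θ (r-1) with hadef
          set b := θ 1 with hbdef
          have hab : a ≤ b := hmono 1 (r-1) (by omega) (le_refl _)
          have hba : b - a ≤ α := by
            have h1 := hmono 0 1 (Nat.zero_le _) (by omega)
            simp only [hadef, hbdef]
            linarith
          have hWsum : Polynomial.aeval z (sect r (m+1) j)
              = ∑ i ∈ Finset.Icc 1 (r-1), w i := by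
            rw [hj3, aeval_sect_top r z hr m]
            apply Finset.sum_congr rfl
            intro i hi
            rw [Finset.mem_Icc] at hi
            rw [hval i (by omega), hw_eq]
          have hmem0 : i0 ∈ Finset.Icc 1 (r-1) := Finset.mem_Icc.2 ⟨hi01, hi0r⟩
          have hWsplit : Polynomial.aeval z (sect r (m+1) j)
              = ((ρ i0 : ℝ) : ℂ) * cis' (θ i0)
                + ∑ i ∈ (Finset.Icc 1 (r-1)).erase i0, w i := by
            rw [hWsum, ← Finset.add_sum_erase _ _ hmem0, hw_eq]
          have hsec : InSector a b (∑ i ∈ (Finset.Icc 1 (r-1)).erase i0, w i) := by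
            apply Finset.sum_induction _ _ (fun _ _ => inSector_add) (inSector_zero a b)
            intro i hi
            have hi' := Finset.mem_Icc.1 (Finset.mem_of_mem_erase hi)
            rw [hw_eq]
            apply inSector_polar (hρnn i (by omega)) _ _ (by linarith)
            · exact hmono i (r-1) (by omega) (le_refl _)
            · exact hmono 1 i hi'.1 (by omega)
          have ha0 : a ≤ θ i0 := hmono i0 (r-1) (by omega) (le_refl _)
          have hb0 : θ i0 ≤ b := hmono 1 i0 hi01 (by omega)
          obtain ⟨ρ', θ', hρ'pos, hθ'a, hθ'b, heq⟩ :=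
            polar_add_sector hi0pos ha0 hb0 (by linarith : b - a < Real.pi) hsec
          refine ⟨(ρ', θ'), fun _ => ?_⟩
          rw [if_neg hj2, if_neg hj2]
          exact ⟨hρ'pos, hθ'a, hθ'b, by rw [hWsplit, heq]⟩
      · exact ⟨(1, 0), fun hc => absurd hc hj⟩
    choose ρθ hkey using key
    set ρ' : ℕ → ℝ := fun j => (ρθ j).1 with hρ'def
    set θ' : ℕ → ℝ := fun j => (ρθ j).2 with hθ'def
    have hρ'pos : ∀ j, j ≤ r-1 → 0 < ρ' j := fun j hj => (hkey j hj).1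
    have hWval : ∀ j, j ≤ r-1 →
        Polynomial.aeval z (sect r (m+1) j) = ((ρ' j : ℝ) : ℂ) * cis' (θ' j) :=
      fun j hj => (hkey j hj).2.2.2
    have hlow_lb : ∀ j, j ≤ r-2 → θ j ≤ θ' j := by
      intro j hj
      have := (hkey j (by omega)).2.1
      rwa [if_pos hj] at this
    have hlow_ub : ∀ j, j ≤ r-2 → θ' j ≤ θh (j+2) + α := by
      intro j hj
      have := (hkey j (by omega)).2.2.1
      rwa [if_pos hj] at this
    have htop_lb : θ (r-1) ≤ θ' (r-1) := by
      have := (hkey (r-1) (le_refl _)).2.1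
      rwa [if_neg (by omega : ¬ (r-1 ≤ r-2))] at this
    have htop_ub : θ' (r-1) ≤ θ 1 := by
      have := (hkey (r-1) (le_refl _)).2.2.1
      rwa [if_neg (by omega : ¬ (r-1 ≤ r-2))] at this
    -- general lower bound for θ' j, j ≤ r-1
    have hgen_lb : ∀ j, j ≤ r-1 → θ j ≤ θ' j := by
      intro j hj
      by_cases hj2 : j ≤ r-2
      · exact hlow_lb j hj2
      · have : j = r-1 := by omega
        rw [this]; exact htop_lb
    -- consecutive monotonicity
    have hcons : ∀ j, j+1 ≤ r-1 → θ' (j+1) ≤ θ' j := by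
      intro j hj1
      have hj2 : j ≤ r-2 := by omega
      by_cases hcase : j+1 ≤ r-2
      · -- difference identity: W(j+1) = W j + w(j+1) - z*w(j+2)
        have hid : Polynomial.aeval z (sect r (m+1) (j+1))
            = Polynomial.aeval z (sect r (m+1) j)
              + Polynomial.aeval z (sect r m (j+1)) - z * Polynomial.aeval z (sect r m (j+2)) := by
          rw [aeval_sect_low r z hr m (j+1) hcase, aeval_sect_low r z hr m j hj2]
          rw [Finset.sum_range_succ]
          have herase : ∑ i ∈ Finset.Icc (j+2) (r-1), Polynomial.aeval z (sect r m i)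
              = Polynomial.aeval z (sect r m (j+2))
                + ∑ i ∈ Finset.Icc (j+3) (r-1), Polynomial.aeval z (sect r m i) := by
            rw [show Finset.Icc (j+3) (r-1) = Finset.Ioc (j+2) (r-1) from (Finset.Icc_add_one_left_eq_Ioc _ _)]
            rw [← Finset.Icc_erase_left]
            exact (Finset.add_sum_erase _ _ (Finset.mem_Icc.2 ⟨le_refl _, by omega⟩)).symm
          rw [herase]
          ring
        -- now compute the sign of the imaginary part
        have hIm : ((starRingEnd ℂ) (Polynomial.aeval z (sect r (m+1) j))
            * Polynomial.aeval z (sect r (m+1) (j+1))).im ≤ 0 := by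
          rw [hid, mul_sub, mul_add]
          rw [hval (j+1) (by omega), hval (j+2) (by omega), hWval j (by omega)]
          simp only [Complex.add_im, Complex.sub_im]
          have t0 : (((starRingEnd ℂ) (((ρ' j : ℝ) : ℂ) * cis' (θ' j)))
              * (((ρ' j : ℝ) : ℂ) * cis' (θ' j))).im = 0 := im_conj_self _
          have t1 : (((starRingEnd ℂ) (((ρ' j : ℝ) : ℂ) * cis' (θ' j)))
              * (((ρ (j+1) : ℝ) : ℂ) * cis' (θ (j+1)))).im ≤ 0 := by
            apply im_conj_polar_nonpos (le_of_lt (hρ'pos j (by omega))) (hρnn (j+1) (by omega))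
            · -- -π ≤ θ(j+1) - θ' j
              have h1 := hlow_ub j hj2
              have h2 := hθh_mono (j+1) (j+2) (by omega)
              rw [hθh_eq (j+1) (by omega)] at h2
              linarith
            · -- θ(j+1) - θ' j ≤ 0
              have h1 := hlow_lb j hj2
              have h2 := hmono j (j+1) (by omega) (by omega)
              linarith
          have t2 : 0 ≤ (((starRingEnd ℂ) (((ρ' j : ℝ) : ℂ) * cis' (θ' j)))
              * (z * (((ρ (j+2) : ℝ) : ℂ) * cis' (θ (j+2))))).im := by
            rw [← hw_eq (j+2), hzw (j+2)]
            apply im_conj_polar_nonneg (le_of_lt (hρ'pos j (by omega)))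
              (mul_nonneg (le_of_lt habs) (hρnn (j+2) (by omega)))
            · -- 0 ≤ θ(j+2) + α - θ' j
              have h1 := hlow_ub j hj2
              rw [hθh_eq (j+2) (by omega)] at h1
              linarith
            · -- θ(j+2) + α - θ' j ≤ π
              have h1 := hlow_lb j hj2
              have h2 := hmono j (j+2) (by omega) (by omega)
              linarith
          linarith [t0, t1, t2]
        -- conclude by the angle comparison
        apply angle_le_of_im_nonpos (hρ'pos j (by omega)) (hρ'pos (j+1) (by omega)) _ _ ?him
        · -- -π < θ'(j+1) - θ' j
          have h1 := hlow_ub j hj2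
          have h2 := hθh_mono (j+1) (j+2) (by omega)
          rw [hθh_eq (j+1) (by omega)] at h2
          have h3 := hgen_lb (j+1) (by omega)
          linarith
        · -- θ'(j+1) - θ' j < π
          have h1 := hlow_ub (j+1) hcase
          have h2 := hθh_mono j (j+3) (by omega)
          rw [hθh_eq j (by omega)] at h2
          have h3 := hlow_lb j hj2
          linarith
        · rw [← hWval j (by omega), ← hWval (j+1) (by omega)]
          exact hIm
      · -- j+1 = r-1, i.e. j = r-2
        have hj3 : j = r-2 := by omega
        have hr1 : r-1 = (r-2)+1 := by omega
        -- identity: W(r-1) = W(r-2) + w(r-1) - w 0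
        have hW2 : Polynomial.aeval z (sect r (m+1) (r-2))
            = Polynomial.aeval z (sect r m 0)
              + ∑ i ∈ Finset.Icc 1 (r-2), Polynomial.aeval z (sect r m i) := by
          rw [aeval_sect_low r z hr m (r-2) (le_refl _)]
          have hempty : Finset.Icc (r-2+2) (r-1) = ∅ := Finset.Icc_eq_empty (by omega)
          rw [hempty, Finset.sum_empty, mul_zero, add_zero]
          rw [show r-2+1 = (r-2)+1 from rfl, Finset.sum_range_succ']
          rw [sum_range_shift (fun i => Polynomial.aeval z (sect r m i)) (r-2)]
          exact add_comm _ _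
        have hW1 : Polynomial.aeval z (sect r (m+1) (r-1))
            = ∑ i ∈ Finset.Icc 1 (r-2), Polynomial.aeval z (sect r m i)
              + Polynomial.aeval z (sect r m (r-1)) := by
          rw [aeval_sect_top r z hr m]
          have hsplit : Finset.Icc 1 (r-1) = insert (r-1) (Finset.Icc 1 (r-2)) := by
            ext x
            simp only [Finset.mem_Icc, Finset.mem_insert]
            omega
          rw [hsplit, Finset.sum_insert (by rw [Finset.mem_Icc]; omega)]
          exact add_comm _ _
        have hid : Polynomial.aeval z (sect r (m+1) (r-1))
            = Polynomial.aeval z (sect r (m+1) (r-2))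
              + Polynomial.aeval z (sect r m (r-1)) - Polynomial.aeval z (sect r m 0) := by
          rw [hW1, hW2]; ring
        have hIm : ((starRingEnd ℂ) (Polynomial.aeval z (sect r (m+1) (r-2)))
            * Polynomial.aeval z (sect r (m+1) (r-1))).im ≤ 0 := by
          rw [hid, mul_sub, mul_add]
          rw [hval (r-1) (le_refl _), hval 0 (by omega), hWval (r-2) (by omega)]
          simp only [Complex.add_im, Complex.sub_im]
          have hub2 : θ' (r-2) ≤ θ 0 := by
            have h1 := hlow_ub (r-2) (le_refl _)
            have h2 := hθh_eq' ((r-2)+2) (by omega)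
            rw [show (r-2)+2 = r-2+2 from rfl] at *
            rw [h2] at h1
            linarith
          have t0 : (((starRingEnd ℂ) (((ρ' (r-2) : ℝ) : ℂ) * cis' (θ' (r-2))))
              * (((ρ' (r-2) : ℝ) : ℂ) * cis' (θ' (r-2)))).im = 0 := im_conj_self _
          have t1 : (((starRingEnd ℂ) (((ρ' (r-2) : ℝ) : ℂ) * cis' (θ' (r-2))))
              * (((ρ (r-1) : ℝ) : ℂ) * cis' (θ (r-1)))).im ≤ 0 := by
            apply im_conj_polar_nonpos (le_of_lt (hρ'pos (r-2) (by omega)))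
              (hρnn (r-1) (le_refl _))
            · linarith
            · have h1 := hlow_lb (r-2) (le_refl _)
              have h2 := hmono (r-2) (r-1) (by omega) (le_refl _)
              linarith
          have t2 : 0 ≤ (((starRingEnd ℂ) (((ρ' (r-2) : ℝ) : ℂ) * cis' (θ' (r-2))))
              * (((ρ 0 : ℝ) : ℂ) * cis' (θ 0))).im := by
            apply im_conj_polar_nonneg (le_of_lt (hρ'pos (r-2) (by omega))) (le_of_lt hρ0)
            · linarith
            · have h1 := hlow_lb (r-2) (le_refl _)
              have h2 := hmono 0 (r-2) (Nat.zero_le _) (by omega)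
              have h3 := hmono (r-2) (r-1) (by omega) (le_refl _)
              linarith
          linarith [t0, t1, t2]
        have hgoal : θ' (r-1) ≤ θ' (r-2) := by
          apply angle_le_of_im_nonpos (hρ'pos (r-2) (by omega)) (hρ'pos (r-1) (le_refl _))
            _ _ ?him2
          · -- -π < θ'(r-1) - θ'(r-2)
            have h1 := hlow_ub (r-2) (le_refl _)
            have h2 := hθh_eq' ((r-2)+2) (by omega)
            rw [h2] at h1
            have h3 := htop_lb
            linarith
          · -- θ'(r-1) - θ'(r-2) < π
            have h1 := htop_ub
            have h2 := hlow_lb (r-2) (le_refl _)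
            have h3 := hmono 0 1 (Nat.zero_le _) (by omega)
            have h4 := hmono (r-2) (r-1) (by omega) (le_refl _)
            linarith
          · rw [← hWval (r-2) (by omega), ← hWval (r-1) (le_refl _)]
            exact hIm
        rw [show j+1 = r-1 by omega, hj3]
        exact hgoal
    -- spread for the new angles
    have hspread' : θ' 0 - θ' (r-1) ≤ α := by
      -- identity : W 0 = w 0 - z * w 1 + z * W(r-1)
      have hW0 : Polynomial.aeval z (sect r (m+1) 0)
          = Polynomial.aeval z (sect r m 0)
            + z * ∑ i ∈ Finset.Icc 2 (r-1), Polynomial.aeval z (sect r m i) := by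
        rw [aeval_sect_low r z hr m 0 (by omega), Finset.sum_range_one]
      have hWr : Polynomial.aeval z (sect r (m+1) (r-1))
          = Polynomial.aeval z (sect r m 1)
            + ∑ i ∈ Finset.Icc 2 (r-1), Polynomial.aeval z (sect r m i) := by
        rw [aeval_sect_top r z hr m]
        rw [show Finset.Icc 2 (r-1) = Finset.Ioc 1 (r-1) from (Finset.Icc_add_one_left_eq_Ioc _ _)]
        rw [← Finset.Icc_erase_left]
        exact (Finset.add_sum_erase _ _ (Finset.mem_Icc.2 ⟨le_refl _, by omega⟩)).symm
      have hid0 : Polynomial.aeval z (sect r (m+1) 0)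
          = Polynomial.aeval z (sect r m 0) - z * Polynomial.aeval z (sect r m 1)
            + z * Polynomial.aeval z (sect r (m+1) (r-1)) := by
        rw [hW0, hWr]; ring
      -- polar form of u = z * W(r-1)
      have hu : z * Polynomial.aeval z (sect r (m+1) (r-1))
          = (((‖z‖ * ρ' (r-1) : ℝ)) : ℂ) * cis' (θ' (r-1) + α) := by
        rw [hWval (r-1) (le_refl _)]
        conv_lhs => rw [hzpolar]
        rw [polar_mul, add_comm α (θ' (r-1))]
      have hIm0 : (((starRingEnd ℂ) ((((‖z‖ * ρ' (r-1) : ℝ)) : ℂ)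
            * cis' (θ' (r-1) + α)))
          * Polynomial.aeval z (sect r (m+1) 0)).im ≤ 0 := by
        rw [hid0, ← hu, mul_add, mul_sub]
        rw [hval 0 (by omega), hval 1 (by omega), hu]
        simp only [Complex.add_im, Complex.sub_im]
        have hzw1 : z * (((ρ 1 : ℝ) : ℂ) * cis' (θ 1))
            = (((‖z‖ * ρ 1 : ℝ)) : ℂ) * cis' (θ 1 + α) := by
          rw [← hw_eq 1, hzw 1]
        have t0 : (((starRingEnd ℂ) ((((‖z‖ * ρ' (r-1) : ℝ)) : ℂ)
              * cis' (θ' (r-1) + α)))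
            * ((((‖z‖ * ρ' (r-1) : ℝ)) : ℂ) * cis' (θ' (r-1) + α))).im = 0 :=
          im_conj_self _
        have t1 : (((starRingEnd ℂ) ((((‖z‖ * ρ' (r-1) : ℝ)) : ℂ)
              * cis' (θ' (r-1) + α)))
            * (((ρ 0 : ℝ) : ℂ) * cis' (θ 0))).im ≤ 0 := by
          apply im_conj_polar_nonpos (mul_nonneg (le_of_lt habs) (le_of_lt (hρ'pos (r-1)
            (le_refl _)))) (le_of_lt hρ0)
          · -- -π ≤ θ 0 - (θ'(r-1) + α)
            have h1 := htop_ub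
            have h2 := hmono 0 1 (Nat.zero_le _) (by omega)
            linarith
          · -- θ 0 - (θ'(r-1) + α) ≤ 0
            have h1 := htop_lb
            linarith [hspread]
        have t2 : 0 ≤ (((starRingEnd ℂ) ((((‖z‖ * ρ' (r-1) : ℝ)) : ℂ)
              * cis' (θ' (r-1) + α)))
            * (z * (((ρ 1 : ℝ) : ℂ) * cis' (θ 1)))).im := by
          rw [hzw1]
          apply im_conj_polar_nonneg (mul_nonneg (le_of_lt habs) (le_of_lt (hρ'pos (r-1)
            (le_refl _)))) (mul_nonneg (le_of_lt habs) (hρnn 1 (by omega)))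
          · have h1 := htop_ub
            linarith
          · have h1 := htop_lb
            have h2 := hmono 1 (r-1) (by omega) (le_refl _)
            have h3 := hmono 0 1 (Nat.zero_le _) (by omega)
            linarith
        linarith [t0, t1, t2]
      have hfin : θ' 0 ≤ θ' (r-1) + α := by
        apply angle_le_of_im_nonpos (mul_pos habs (hρ'pos (r-1) (le_refl _)))
          (hρ'pos 0 (by omega)) _ _ ?him3
        · -- -π < θ' 0 - (θ'(r-1) + α)
          have h1 := hgen_lb 0 (by omega)
          have h2 := htop_ub
          have h3 := hmono 0 1 (Nat.zero_le _) (by omega)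
          linarith
        · -- θ' 0 - (θ'(r-1) + α) < π
          have h1 := hlow_ub 0 (by omega)
          have h2 := hθh_ub (0+2)
          have h3 := htop_lb
          linarith [hspread]
        · rw [← hWval 0 (by omega)]
          exact hIm0
      linarith
    -- assemble the new invariant
    refine ⟨θ', ρ', ?_, hspread', fun j hj => le_of_lt (hρ'pos j hj), hρ'pos 0 (by omega),
      hWval, fun j hj _ => hρ'pos j hj⟩
    exact antitone_of_consecutive hcons

end MainInduction
section Glue
open Polynomial Finset Complex

lemma coeff_hsec (r n : ℕ) (hr : 2 ≤ r) (h : Fin r → Polynomial ℝ)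
    (hsec : (∑ i ∈ Finset.range (r - 1), (Polynomial.X : Polynomial ℝ) ^ i) ^ n =
      ∑ j : Fin r, Polynomial.X ^ (j : ℕ) * (h j).comp (Polynomial.X ^ r)) :
    ∀ j : Fin r, h j = sect r n (j : ℕ) := by
  intro j
  ext k
  rw [coeff_sect r hr]
  have hg : gpoly r = ∑ i ∈ Finset.range (r - 1), (Polynomial.X : Polynomial ℝ) ^ i := rfl
  rw [hg, hsec, Polynomial.finset_sum_coeff]
  have hterm : ∀ j' : Fin r,
      (Polynomial.X ^ (j' : ℕ) * (h j').comp (Polynomial.X ^ r)).coeff (r*k + (j : ℕ))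
        = if (j' : ℕ) ≤ r*k + (j : ℕ) then
            (if r ∣ (r*k + (j : ℕ) - (j' : ℕ)) then
              (h j').coeff ((r*k + (j : ℕ) - (j' : ℕ)) / r) else 0)
          else 0 := by
    intro j'
    rw [← Polynomial.expand_eq_comp_X_pow, Polynomial.X_pow_mul,
      Polynomial.coeff_mul_X_pow']
    by_cases hle : (j' : ℕ) ≤ r*k + (j : ℕ)
    · rw [if_pos hle, if_pos hle, Polynomial.coeff_expand (by omega : 0 < r)]
    · rw [if_neg hle, if_neg hle]
  rw [Finset.sum_congr rfl (fun j' _ => hterm j')]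
  rw [Finset.sum_eq_single_of_mem j (Finset.mem_univ j)]
  · rw [if_pos (by omega : (j : ℕ) ≤ r*k + (j : ℕ))]
    have h1 : r*k + (j : ℕ) - (j : ℕ) = r*k := by omega
    rw [h1, if_pos (dvd_mul_right r k), Nat.mul_div_cancel_left k (by omega : 0 < r)]
  · intro j' _ hj'
    by_cases hle : (j' : ℕ) ≤ r*k + (j : ℕ)
    · rw [if_pos hle]
      by_cases hdvd : r ∣ (r*k + (j : ℕ) - (j' : ℕ))
      · exfalso
        obtain ⟨t, ht⟩ := hdvd
        have hN : r*k + (j : ℕ) = r*t + (j' : ℕ) := by omega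
        have hj1 : (j : ℕ) < r := j.2
        have hj2 : (j' : ℕ) < r := j'.2
        have e1 : ((j : ℕ) + r*k) % r = (j : ℕ) % r := by
          rw [Nat.mul_comm]
          exact Nat.add_mul_mod_self_right _ _ _
        have e2 : ((j' : ℕ) + r*t) % r = (j' : ℕ) % r := by
          rw [Nat.mul_comm]
          exact Nat.add_mul_mod_self_right _ _ _
        have e3 : (j : ℕ) % r = (j' : ℕ) % r := by
          rw [← e1, ← e2]
          congr 1
          omega
        rw [Nat.mod_eq_of_lt hj1, Nat.mod_eq_of_lt hj2] at e3
        exact hj' (Fin.ext e3.symm)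
      · rw [if_neg hdvd]
    · rw [if_neg hle]

theorem stmt1' (r n : ℕ) (hr : 2 ≤ r) (h : Fin r → Polynomial ℝ)
    (hsec : (∑ i ∈ Finset.range (r - 1), (Polynomial.X : Polynomial ℝ) ^ i) ^ n =
      ∑ j : Fin r, Polynomial.X ^ (j : ℕ) * (h j).comp (Polynomial.X ^ r)) :
    ∀ j : Fin r, (h j).roots.card = (h j).natDegree := by
  intro j
  rw [coeff_hsec r n hr h hsec j]
  by_cases hzero : sect r n (j : ℕ) = 0
  · rw [hzero]; simp
  · apply realRooted_of_no_UHP_roots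
    intro ζ hζ
    have hInv : ∀ M, SInv r ζ M := by
      intro M
      induction M with
      | zero => exact SInv_zero r ζ hr hζ
      | succ m ih => exact SInv_step r ζ hr hζ m ih
    obtain ⟨θ, ρ, _, _, _, _, hval, hne⟩ := hInv n
    have hjr : (j : ℕ) ≤ r - 1 := by have := j.2; omega
    rw [hval (j : ℕ) hjr]
    have hρpos := hne (j : ℕ) hjr hzero
    exact mul_ne_zero (by exact_mod_cast ne_of_gt hρpos) (cis'_ne_zero _)

end Glue

/-- if `(1 + x + ⋯ + x^{r-2})^n = h₀(x^r) + x h₁(x^r) + ⋯ + x^{r-1} h_{r-1}(x^r)`,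
then each `h_j` has only real roots. -/
theorem stmt1 (r n : ℕ) (hr : 2 ≤ r) (h : Fin r → Polynomial ℝ)
    (hsec : (∑ i ∈ Finset.range (r - 1), (X : Polynomial ℝ) ^ i) ^ n =
      ∑ j : Fin r, X ^ (j : ℕ) * (h j).comp (X ^ r)) :
    ∀ j : Fin r, RealRooted (h j) := by
  intro j
  show (h j).roots.card = (h j).natDegree
  exact stmt1' r n hr h hsec j
end RealRootedCriterion
end

section
/- Let a, b, c, d be nonnegative reals with ad ≥ bc, and let f, g be real-rooted polynomials with nonnegative coefficients such that g interlaces f. Then the polynomial a·g + b·f interlaces c·g + d·f, provided both are nonzero. -/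
open Polynomial Finset

noncomputable def cntL (L : List ℝ) (x : ℝ) : ℕ := (L.filter (fun y => decide (x ≤ y))).length

lemma cntL_le_length (L : List ℝ) (x : ℝ) : cntL L x ≤ L.length :=
  List.length_filter_le _ _

lemma sorted_getD_mono {L : List ℝ} (hs : L.Pairwise (· ≤ ·)) {i j : ℕ} (hij : i ≤ j)
    (hj : j < L.length) : L.getD i 0 ≤ L.getD j 0 := by
  rcases eq_or_lt_of_le hij with rfl | hlt
  · exact le_refl _
  · rw [L.getD_eq_getElem 0 (lt_of_le_of_lt hij hj), L.getD_eq_getElem 0 hj]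
    exact List.pairwise_iff_getElem.mp hs i j _ _ hlt

lemma M1 {L : List ℝ} (hs : L.Pairwise (· ≤ ·)) (x : ℝ) {k : ℕ} (hk1 : 1 ≤ k)
    (hk2 : k ≤ L.length) : x ≤ L.getD (L.length - k) 0 ↔ k ≤ cntL L x := by
  have hi : L.length - k < L.length := by omega
  constructor
  · intro hx
    have hdrop : ∀ y ∈ L.drop (L.length - k), x ≤ y := by
      intro y hy
      obtain ⟨j, hj, hyv⟩ := List.mem_iff_getElem.mp hy
      have hjl : L.length - k + j < L.length := by
        rw [List.length_drop] at hj; omega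
      have hyv' : y = L[L.length - k + j] := by rw [← hyv, List.getElem_drop]
      rw [hyv']
      calc x ≤ L.getD (L.length - k) 0 := hx
        _ ≤ L.getD (L.length - k + j) 0 := sorted_getD_mono hs (Nat.le_add_right _ _) hjl
        _ = L[L.length - k + j] := L.getD_eq_getElem 0 hjl
    have heq : cntL (L.drop (L.length - k)) x = k := by
      unfold cntL
      rw [List.filter_eq_self.mpr (by intro a ha; exact decide_eq_true (hdrop a ha))]
      rw [List.length_drop]; omega
    calc k = cntL (L.drop (L.length - k)) x := heq.symm
      _ ≤ cntL L x := by
          unfold cntL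
          conv_rhs => rw [← List.take_append_drop (L.length - k) L]
          rw [List.filter_append, List.length_append]
          omega
  · intro hcnt
    by_contra hx
    push_neg at hx
    have htake : ∀ y ∈ L.take (L.length - k + 1), ¬ (x ≤ y) := by
      intro y hy
      obtain ⟨j, hj, hyv⟩ := List.mem_iff_getElem.mp hy
      have hjl : j < L.length := by
        rw [List.length_take] at hj; omega
      have hjle : j ≤ L.length - k := by
        rw [List.length_take] at hj; omega
      have hyv' : y = L[j] := by rw [← hyv, List.getElem_take]
      have : L.getD j 0 ≤ L.getD (L.length - k) 0 := sorted_getD_mono hs hjle hi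
      rw [L.getD_eq_getElem 0 hjl] at this
      rw [hyv']
      intro hxy
      exact absurd (le_trans hxy this) (not_le.mpr hx)
    have h0 : cntL (L.take (L.length - k + 1)) x = 0 := by
      unfold cntL
      rw [List.filter_eq_nil_iff.mpr (by intro a ha; simpa using htake a ha)]
      rfl
    have hsplit : cntL L x = cntL (L.take (L.length - k + 1)) x + cntL (L.drop (L.length - k + 1)) x := by
      unfold cntL
      conv_lhs => rw [← List.take_append_drop (L.length - k + 1) L]
      rw [List.filter_append, List.length_append]
    have hdlen : cntL (L.drop (L.length - k + 1)) x ≤ k - 1 := by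
      calc cntL (L.drop (L.length - k + 1)) x ≤ (L.drop (L.length - k + 1)).length :=
            cntL_le_length _ _
        _ = k - 1 := by rw [List.length_drop]; omega
    omega

lemma M2 {L : List ℝ} (hs : L.Pairwise (· ≤ ·)) (x : ℝ) {c : ℕ} (hc : c ≤ L.length)
    (h1 : 1 ≤ c → x ≤ L.getD (L.length - c) 0)
    (h2 : c < L.length → ¬ x ≤ L.getD (L.length - c - 1) 0) : cntL L x = c := by
  have hub : cntL L x ≤ L.length := cntL_le_length _ _
  have hge : 1 ≤ c → c ≤ cntL L x := fun h => (M1 hs x h hc).mp (h1 h)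
  have hlt : c < L.length → ¬ (c + 1 ≤ cntL L x) := by
    intro h hcon
    refine h2 h ?_
    have h3 := (M1 (k := c+1) hs x (by omega) (by omega)).mpr hcon
    rwa [← Nat.sub_sub] at h3
  rcases Nat.eq_zero_or_pos c with rfl | hc1
  · rcases Nat.eq_zero_or_pos L.length with hL | hL
    · omega
    · have := hlt hL; omega
  · have := hge hc1
    rcases eq_or_lt_of_le hc with heq | h
    · omega
    · have := hlt h; omega

/-- Bridging lemma A: pointwise domination of sorted lists vs counting. -/
lemma bridgeA {L M : List ℝ} (hL : L.Pairwise (· ≤ ·)) (hM : M.Pairwise (· ≤ ·))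
    {e : ℕ} (hlen : L.length = M.length + e) :
    (∀ j, j < M.length → M.getD j 0 ≤ L.getD (j + e) 0) ↔
      ∀ x, cntL M x ≤ cntL L x := by
  constructor
  · intro h x
    rcases Nat.eq_zero_or_pos (cntL M x) with h0 | hpos
    · omega
    set k := cntL M x with hk
    have hkM : k ≤ M.length := cntL_le_length _ _
    have hx : x ≤ M.getD (M.length - k) 0 := (M1 hM x hpos hkM).mpr (le_refl _)
    have hj : M.length - k < M.length := by omega
    have := h (M.length - k) hj
    have hidx : L.length - k = M.length - k + e := by omega
    have hx2 : x ≤ L.getD (L.length - k) 0 := by rw [hidx]; linarith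
    exact (M1 hL x hpos (by omega)).mp hx2
  · intro h j hj
    set x := M.getD j 0 with hx
    set k := M.length - j with hk
    have h1 : k ≤ cntL M x := (M1 hM x (by omega) (by omega)).mp (by
      have : M.length - k = j := by omega
      rw [this])
    have h2 : k ≤ cntL L x := le_trans h1 (h x)
    have h3 : x ≤ L.getD (L.length - k) 0 := (M1 hL x (by omega) (by omega)).mpr h2
    have hidx : L.length - k = j + e := by omega
    rwa [hidx] at h3

/-- Bridging lemma B: shifted domination vs counting (+1). -/
lemma bridgeB {L M : List ℝ} (hL : L.Pairwise (· ≤ ·)) (hM : M.Pairwise (· ≤ ·))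
    {e : ℕ} (he : e ≤ 1) (hlen : L.length = M.length + e) :
    (∀ j, j + 1 < L.length → L.getD j 0 ≤ M.getD (j + 1 - e) 0) ↔
      ∀ x, cntL L x ≤ cntL M x + 1 := by
  constructor
  · intro h x
    set k := cntL L x with hk
    rcases le_or_gt k 1 with h1 | h1
    · omega
    have hkL : k ≤ L.length := cntL_le_length _ _
    have hx : x ≤ L.getD (L.length - k) 0 := (M1 hL x (by omega) hkL).mpr (le_refl _)
    have hj : L.length - k + 1 < L.length := by omega
    have hstep := h (L.length - k) hj
    have hidx : M.length - (k - 1) = L.length - k + 1 - e := by omega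
    have hx2 : x ≤ M.getD (M.length - (k - 1)) 0 := by rw [hidx]; linarith
    have : k - 1 ≤ cntL M x := (M1 hM x (by omega) (by omega)).mp hx2
    omega
  · intro h j hj
    set x := L.getD j 0 with hx
    set k := L.length - j with hk
    have h1 : k ≤ cntL L x := (M1 hL x (by omega) (by omega)).mp (by
      have : L.length - k = j := by omega
      rw [this])
    have h2 : k - 1 ≤ cntL M x := by have := h x; omega
    have h3 : x ≤ M.getD (M.length - (k - 1)) 0 := (M1 hM x (by omega) (by omega)).mpr h2
    have hidx : M.length - (k - 1) = j + 1 - e := by omega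
    rwa [hidx] at h3

noncomputable def cge (p : Polynomial ℝ) (x : ℝ) : ℕ :=
  Multiset.card (p.roots.filter (x ≤ ·))

lemma cge_eq_cntL (p : Polynomial ℝ) (x : ℝ) : cge p x = cntL (rootList p) x := by
  unfold cge cntL rootList
  conv_lhs => rw [← Multiset.sort_eq p.roots (· ≤ ·)]
  rw [Multiset.filter_coe, Multiset.coe_card]

lemma rootList_sorted (p : Polynomial ℝ) : (rootList p).Pairwise (· ≤ ·) :=
  Multiset.pairwise_sort _ _

lemma rootList_length (p : Polynomial ℝ) : (rootList p).length = Multiset.card p.roots :=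
  Multiset.length_sort _

lemma cge_mul {p q : Polynomial ℝ} (hp : p ≠ 0) (hq : q ≠ 0) (x : ℝ) :
    cge (p * q) x = cge p x + cge q x := by
  unfold cge
  rw [Polynomial.roots_mul (mul_ne_zero hp hq), Multiset.filter_add, Multiset.card_add]

lemma cge_smul {a : ℝ} (ha : a ≠ 0) (p : Polynomial ℝ) (x : ℝ) :
    cge (a • p) x = cge p x := by
  unfold cge
  rw [Polynomial.roots_smul_nonzero p ha]

lemma exists_low (S : Multiset ℝ) : ∃ x : ℝ, ∀ y ∈ S, x ≤ y := by
  induction S using Multiset.induction_on with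
  | empty => exact ⟨0, by simp⟩
  | cons a s ih =>
      obtain ⟨x, hx⟩ := ih
      exact ⟨min x a, by
        intro y hy
        rcases Multiset.mem_cons.mp hy with rfl | hy
        · exact min_le_right _ _
        · exact le_trans (min_le_left _ _) (hx y hy)⟩

lemma cge_eq_card {p : Polynomial ℝ} {x : ℝ} (h : ∀ y ∈ p.roots, x ≤ y) :
    cge p x = Multiset.card p.roots := by
  unfold cge
  rw [Multiset.filter_eq_self.mpr h]

/-- The counting form of interlacing. -/
def CInt (g f : Polynomial ℝ) : Prop :=
  RealRooted f ∧ RealRooted g ∧ 0 < f.leadingCoeff ∧ 0 < g.leadingCoeff ∧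
    ∀ x, cge g x ≤ cge f x ∧ cge f x ≤ cge g x + 1

lemma rootList_length_rr {p : Polynomial ℝ} (hp : RealRooted p) :
    (rootList p).length = p.natDegree := by
  rw [rootList_length, hp]

lemma bridge {f g : Polynomial ℝ} (hf : f ≠ 0) (hg : g ≠ 0) :
    Interlaces g f ↔ CInt g f := by
  constructor
  · rintro (rfl | rfl | ⟨hfr, hgr, hlf, hlg, hshape⟩)
    · exact absurd rfl hg
    · exact absurd rfl hf
    refine ⟨hfr, hgr, hlf, hlg, fun x => ?_⟩
    have hLs := rootList_sorted f
    have hMs := rootList_sorted g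
    have hLl := rootList_length_rr hfr
    have hMl := rootList_length_rr hgr
    rcases hshape with ⟨hdeg, hptA, hptB⟩ | ⟨hdeg, hptA, hptB⟩
    · constructor
      · rw [cge_eq_cntL, cge_eq_cntL]
        refine (bridgeA hLs hMs (e := 0) (by omega) ).mp ?_ x
        intro j hj
        exact hptA j (by omega)
      · rw [cge_eq_cntL, cge_eq_cntL]
        refine (bridgeB hLs hMs (e := 0) (by omega) (by omega)).mp ?_ x
        intro j hj
        simpa using hptB j (by omega)
    · constructor
      · rw [cge_eq_cntL, cge_eq_cntL]
        refine (bridgeA hLs hMs (e := 1) (by omega)).mp ?_ x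
        intro j hj
        exact hptB j (by omega)
      · rw [cge_eq_cntL, cge_eq_cntL]
        refine (bridgeB hLs hMs (e := 1) (by omega) (by omega)).mp ?_ x
        intro j hj
        simpa using hptA j (by omega)
  · rintro ⟨hfr, hgr, hlf, hlg, hcnt⟩
    right; right
    refine ⟨hfr, hgr, hlf, hlg, ?_⟩
    have hLs := rootList_sorted f
    have hMs := rootList_sorted g
    have hLl := rootList_length_rr hfr
    have hMl := rootList_length_rr hgr
    -- degree relation from counts at a low point
    obtain ⟨x₀, hx₀f⟩ := exists_low (f.roots + g.roots)
    have hcf : cge f x₀ = f.natDegree := by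
      rw [cge_eq_card (fun y hy => hx₀f y (by simp [hy]))]; exact hfr
    have hcg : cge g x₀ = g.natDegree := by
      rw [cge_eq_card (fun y hy => hx₀f y (by simp [hy]))]; exact hgr
    have hdeg : f.natDegree = g.natDegree ∨ f.natDegree = g.natDegree + 1 := by
      have h1 := (hcnt x₀).1
      have h2 := (hcnt x₀).2
      omega
    rcases hdeg with hdeg | hdeg
    · left
      refine ⟨hdeg, ?_, ?_⟩
      · intro i hi
        exact (bridgeA hLs hMs (e := 0) (by omega)).mpr (fun x => by rw [← cge_eq_cntL, ← cge_eq_cntL]; exact (hcnt x).1) i (by omega)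
      · intro i hi
        simpa using (bridgeB hLs hMs (e := 0) (by omega) (by omega)).mpr
          (fun x => by rw [← cge_eq_cntL, ← cge_eq_cntL]; exact (hcnt x).2) i (by omega)
    · right
      refine ⟨hdeg, ?_, ?_⟩
      · intro i hi
        simpa using (bridgeB hLs hMs (e := 1) (by omega) (by omega)).mpr
          (fun x => by rw [← cge_eq_cntL, ← cge_eq_cntL]; exact (hcnt x).2) i (by omega)
      · intro i hi
        exact (bridgeA hLs hMs (e := 1) (by omega)).mpr (fun x => by rw [← cge_eq_cntL, ← cge_eq_cntL]; exact (hcnt x).1) i (by omega)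

lemma sign_prod_aux (x : ℝ) (s : Multiset ℝ) (hx : ∀ r ∈ s, x ≠ r) :
    0 < (s.map (fun r => x - r)).prod * (-1 : ℝ) ^ (Multiset.card (s.filter (x ≤ ·))) := by
  induction s using Multiset.induction_on with
  | empty => simp
  | cons r s ih =>
      have hxr : x ≠ r := hx r (Multiset.mem_cons_self _ _)
      have ih' := ih (fun t ht => hx t (Multiset.mem_cons_of_mem ht))
      rw [Multiset.map_cons, Multiset.prod_cons, Multiset.filter_cons]
      by_cases h : x ≤ r
      · have hlt : x < r := lt_of_le_of_ne h hxr
        simp only [if_pos h]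
        rw [Multiset.card_add, Multiset.card_singleton]
        have : (-1 : ℝ) ^ (1 + Multiset.card (s.filter (x ≤ ·))) =
            -(-1 : ℝ) ^ (Multiset.card (s.filter (x ≤ ·))) := by
          rw [pow_add]; ring
        rw [this]
        nlinarith [ih']
      · simp only [if_neg h]
        rw [Multiset.card_add]
        push_neg at h
        have : (x - r) > 0 := by linarith
        simp only [Multiset.card_zero, zero_add]
        nlinarith [ih']

lemma eval_sign {p : Polynomial ℝ} (hp : p ≠ 0) (hrr : RealRooted p)
    (hlc : 0 < p.leadingCoeff) {x : ℝ} (hx : x ∉ p.roots) :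
    0 < p.eval x * (-1 : ℝ) ^ (cge p x) := by
  have hsplit : Splits p := (splits_iff_card_roots).mpr hrr
  have hfac := hsplit.eq_prod_roots
  have hx' : ∀ r ∈ p.roots, x ≠ r := by
    intro r hr h
    exact hx (h ▸ hr)
  have heval : p.eval x = p.leadingCoeff * ((p.roots.map (fun r => x - r)).prod) := by
    conv_lhs => rw [hfac]
    rw [eval_mul, eval_C, Polynomial.eval_multiset_prod]
    congr 2
    rw [Multiset.map_map]
    congr 1
    funext r
    simp
  rw [heval, cge]
  have := sign_prod_aux x p.roots hx'
  nlinarith [this, hlc]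

lemma exists_low_sign {p : Polynomial ℝ} (hlc : 0 < p.leadingCoeff) (B : ℝ) :
    ∃ x, x < B ∧ 0 < p.eval x * (-1 : ℝ) ^ p.natDegree := by
  rcases Nat.eq_zero_or_pos p.natDegree with h0 | hpos
  · refine ⟨B - 1, by linarith, ?_⟩
    have := Polynomial.eq_C_of_natDegree_eq_zero h0
    rw [h0, pow_zero, mul_one, this, eval_C]
    rw [this] at hlc
    simpa using hlc
  · set q := p.comp (-X : Polynomial ℝ) with hq
    have hnegX : (-X : Polynomial ℝ).natDegree = 1 := by
      simp [natDegree_neg]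
    have hqdeg : q.natDegree = p.natDegree := by
      rw [hq, natDegree_comp, hnegX, mul_one]
    have hqlc : q.leadingCoeff = p.leadingCoeff * (-1 : ℝ) ^ p.natDegree := by
      rw [hq, leadingCoeff_comp (by rw [hnegX]; omega)]
      congr 1
      rw [leadingCoeff_neg, leadingCoeff_X]
    set r := ((-1 : ℝ) ^ p.natDegree) • q with hr
    have hrlc : r.leadingCoeff = p.leadingCoeff := by
      rw [hr, Polynomial.smul_eq_C_mul, leadingCoeff_mul, leadingCoeff_C, hqlc]
      have h2 : ((-1:ℝ) ^ p.natDegree) * ((-1:ℝ) ^ p.natDegree) = 1 := by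
        rw [← pow_add]; exact Even.neg_one_pow ⟨p.natDegree, by ring⟩
      linear_combination p.leadingCoeff * h2
    have hrdeg : 0 < r.degree := by
      have hrne : r ≠ 0 := by
        intro h
        rw [h, leadingCoeff_zero] at hrlc
        exact absurd hrlc.symm (ne_of_gt hlc)
      have : r.natDegree = p.natDegree := by
        rw [hr, Polynomial.smul_eq_C_mul, natDegree_mul (by
          simpa using (pow_ne_zero _ (by norm_num : (-1:ℝ) ≠ 0))) (by
            intro h; rw [hr, h, smul_zero] at hrne; exact hrne rfl)]
        simp [hqdeg]
      rw [Polynomial.degree_eq_natDegree hrne, this]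
      exact_mod_cast hpos
    have htend : Filter.Tendsto (fun x => r.eval x) Filter.atTop Filter.atTop :=
      Polynomial.tendsto_atTop_of_leadingCoeff_nonneg r hrdeg (le_of_lt (hrlc ▸ hlc))
    obtain ⟨A, hA⟩ := (Filter.tendsto_atTop.mp htend 1).exists_forall_of_atTop
    set y := max A (-B + 1) with hy
    have h1 : (1 : ℝ) ≤ r.eval y := hA y (le_max_left _ _)
    have h2 : r.eval y = (-1 : ℝ) ^ p.natDegree * p.eval (-y) := by
      rw [hr, Polynomial.eval_smul, hq, Polynomial.eval_comp]
      simp [smul_eq_mul]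
    refine ⟨-y, by
      have := le_max_right A (-B + 1)
      simp only [hy] at *
      linarith, ?_⟩
    rw [h2] at h1
    linarith [h1]

lemma ivt_root {p : Polynomial ℝ} {a b : ℝ} (hab : a < b)
    (hs : p.eval a * p.eval b < 0) : ∃ c, a < c ∧ c < b ∧ p.eval c = 0 := by
  rcases lt_or_ge (p.eval a) 0 with ha | ha
  · have hb : 0 < p.eval b := by nlinarith
    have := intermediate_value_Ioo (le_of_lt hab) p.continuousOn
    obtain ⟨c, hc, hceq⟩ := this (Set.mem_Ioo.mpr ⟨ha, hb⟩)
    exact ⟨c, hc.1, hc.2, hceq⟩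
  · have ha' : 0 < p.eval a := by
      rcases eq_or_lt_of_le ha with h | h
      · exfalso; rw [← h] at hs; simp at hs
      · exact h
    have hb : p.eval b < 0 := by nlinarith
    have := intermediate_value_Ioo' (le_of_lt hab) p.continuousOn
    obtain ⟨c, hc, hceq⟩ := this (Set.mem_Ioo.mpr ⟨hb, ha'⟩)
    exact ⟨c, hc.1, hc.2, hceq⟩

lemma strict_of_step {w : ℕ → ℝ} {n : ℕ} (h : ∀ i, i + 1 < n → w i < w (i + 1)) :
    ∀ i j, i < j → j < n → w i < w j := by
  intro i j hij hjn
  induction j with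
  | zero => omega
  | succ k ih =>
      rcases Nat.lt_or_ge i k with h1 | h1
      · exact lt_trans (ih h1 (by omega)) (h k (by omega))
      · have hik : i = k := by omega
        subst hik; exact h i (by omega)

lemma roots_eq_of_found {p : Polynomial ℝ} (hp : p ≠ 0) {n : ℕ} (hdeg : p.natDegree = n)
    {w : ℕ → ℝ} (hstep : ∀ i, i + 1 < n → w i < w (i + 1))
    (hroot : ∀ i < n, p.eval (w i) = 0) :
    RealRooted p ∧ rootList p = (List.range n).map w := by
  set WL := (List.range n).map w with hWL
  have hlen : WL.length = n := by simp [hWL]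
  have hpw : WL.Pairwise (· < ·) := by
    rw [List.pairwise_iff_getElem]
    intro i j hi hj hij
    rw [hlen] at hi hj
    have e1 : WL[i]'(by rwa [hlen]) = w i := by simp [hWL]
    have e2 : WL[j]'(by rwa [hlen]) = w j := by simp [hWL]
    rw [e1, e2]
    exact strict_of_step hstep i j hij hj
  have hnd : WL.Nodup := hpw.imp ne_of_lt
  have hsorted : WL.Pairwise (· ≤ ·) := hpw.imp le_of_lt
  have hsub : (↑WL : Multiset ℝ) ≤ p.roots := by
    rw [← Multiset.coe_nodup] at hnd
    rw [Multiset.le_iff_subset hnd]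
    intro y hy
    rw [Multiset.mem_coe, hWL, List.mem_map] at hy
    obtain ⟨i, hi, rfl⟩ := hy
    rw [List.mem_range] at hi
    rw [Polynomial.mem_roots hp]
    exact hroot i hi
  have hcard1 : Multiset.card (↑WL : Multiset ℝ) = n := by simp [hlen]
  have hcard2 : Multiset.card p.roots ≤ n := hdeg ▸ p.card_roots'
  have hroots : p.roots = ↑WL :=
    (Multiset.eq_of_le_of_card_le hsub (by omega)).symm
  constructor
  · rw [RealRooted, hroots, hcard1, hdeg]
  · have hperm : (p.roots.sort (· ≤ ·)) = WL := by
      refine List.Perm.eq_of_pairwise' (Multiset.pairwise_sort _ _) hsorted ?_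
      rw [← Multiset.coe_eq_coe, Multiset.sort_eq, hroots]
    exact hperm

lemma combo_lead {f g : Polynomial ℝ} (hf : f ≠ 0)
    (hmn : g.natDegree ≤ f.natDegree) (hgc : 0 ≤ g.coeff f.natDegree)
    (hlf : 0 < f.leadingCoeff) {α β : ℝ} (hα : 0 ≤ α) (hβ : 0 < β) :
    (α • g + β • f) ≠ 0 ∧ (α • g + β • f).natDegree = f.natDegree ∧
      0 < (α • g + β • f).leadingCoeff := by
  set p := α • g + β • f with hp
  have hcoeff : p.coeff f.natDegree = α * g.coeff f.natDegree + β * f.leadingCoeff := by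
    rw [hp, coeff_add, coeff_smul, coeff_smul, smul_eq_mul, smul_eq_mul, leadingCoeff]
  have hpos : 0 < p.coeff f.natDegree := by nlinarith
  have hne : p ≠ 0 := by
    intro h
    rw [h, coeff_zero] at hpos
    exact lt_irrefl _ hpos
  have hle : p.natDegree ≤ f.natDegree :=
    le_trans (natDegree_add_le _ _)
      (max_le (le_trans (natDegree_smul_le _ _) hmn) (natDegree_smul_le _ _))
  have hge : f.natDegree ≤ p.natDegree := le_natDegree_of_ne_zero (ne_of_gt hpos)
  have hdeg : p.natDegree = f.natDegree := le_antisymm hle hge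
  refine ⟨hne, hdeg, ?_⟩
  rw [leadingCoeff, hdeg]
  exact hpos

lemma sign_flip {A B : ℝ} {k : ℕ} (hA : 0 < A * (-1 : ℝ) ^ k)
    (hB : 0 < B * (-1 : ℝ) ^ (k + 1)) : A * B < 0 := by
  have h1 : ((-1 : ℝ) ^ k) * ((-1 : ℝ) ^ k) = 1 := by
    rw [← pow_add]; exact Even.neg_one_pow ⟨k, by ring⟩
  rw [pow_succ] at hB
  have hB' : B * (-1 : ℝ) ^ k < 0 := by nlinarith
  nlinarith [mul_pos hA (neg_pos.mpr hB'), h1]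

lemma rootList_getD_mem {p : Polynomial ℝ} {i : ℕ} (hi : i < (rootList p).length) :
    (rootList p).getD i 0 ∈ p.roots := by
  rw [(rootList p).getD_eq_getElem 0 hi]
  have := List.getElem_mem (l := rootList p) (by exact hi)
  rwa [← Multiset.mem_sort (· ≤ ·)]

lemma sandwich_coprime {f g : Polynomial ℝ} (hf : f ≠ 0) (hg : g ≠ 0)
    (hfr : RealRooted f) (hgr : RealRooted g)
    (hlf : 0 < f.leadingCoeff) (hlg : 0 < g.leadingCoeff)
    (hcnt : ∀ x, cge g x ≤ cge f x ∧ cge f x ≤ cge g x + 1)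
    (hdisj : ∀ r, r ∈ f.roots → r ∉ g.roots)
    {α β : ℝ} (hα : 0 < α) (hβ : 0 < β) :
    RealRooted (α • g + β • f) ∧ 0 < (α • g + β • f).leadingCoeff ∧
      ∀ x, cge g x ≤ cge (α • g + β • f) x ∧ cge (α • g + β • f) x ≤ cge f x := by
  obtain ⟨x₀, hx₀⟩ := exists_low (f.roots + g.roots)
  have hcf : cge f x₀ = f.natDegree := by
    rw [cge_eq_card (fun y hy => hx₀ y (by simp [hy]))]; exact hfr
  have hcg : cge g x₀ = g.natDegree := by
    rw [cge_eq_card (fun y hy => hx₀ y (by simp [hy]))]; exact hgr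
  have hmn : g.natDegree ≤ f.natDegree ∧ f.natDegree ≤ g.natDegree + 1 := by
    have h1 := (hcnt x₀).1
    have h2 := (hcnt x₀).2
    omega
  have hgc : 0 ≤ g.coeff f.natDegree := by
    rcases eq_or_lt_of_le hmn.1 with heq | hlt
    · rw [← heq]; exact le_of_lt (by rwa [Polynomial.leadingCoeff] at hlg)
    · rw [coeff_eq_zero_of_natDegree_lt hlt]
  obtain ⟨hpne, hpdeg, hplc⟩ := combo_lead hf hmn.1 hgc hlf (le_of_lt hα) hβ
  rcases Nat.eq_zero_or_pos f.natDegree with hn0 | hnpos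
  · -- degenerate constant case
    have hfd : Multiset.card f.roots = 0 := by rw [hfr, hn0]
    have hgd : Multiset.card g.roots = 0 := by rw [hgr]; omega
    have hpd : Multiset.card (α • g + β • f).roots = 0 := by
      have := (α • g + β • f).card_roots'
      omega
    refine ⟨by rw [RealRooted, hpd, hpdeg, hn0], hplc, fun x => ?_⟩
    have e1 : cge g x = 0 := by
      unfold cge
      have : Multiset.card (Multiset.filter (x ≤ ·) g.roots) ≤ 0 :=
        hgd ▸ Multiset.card_le_card (Multiset.filter_le _ _)
      omega
    have e2 : cge (α • g + β • f) x = 0 := by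
      unfold cge
      have : Multiset.card (Multiset.filter (x ≤ ·) (α • g + β • f).roots) ≤ 0 :=
        hpd ▸ Multiset.card_le_card (Multiset.filter_le _ _)
      omega
    omega
  -- main case
  have hUs := rootList_sorted f
  have hVs := rootList_sorted g
  have hUl : (rootList f).length = f.natDegree := rootList_length_rr hfr
  have hVl : (rootList g).length = g.natDegree := rootList_length_rr hgr
  set U := rootList f with hU
  set V := rootList g with hV
  set u : ℕ → ℝ := fun i => U.getD i 0 with hu
  set v : ℕ → ℝ := fun i => V.getD i 0 with hv
  have hAx : ∀ x, cntL V x ≤ cntL U x := fun x => by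
    rw [hU, hV, ← cge_eq_cntL, ← cge_eq_cntL]; exact (hcnt x).1
  have hBx : ∀ x, cntL U x ≤ cntL V x + 1 := fun x => by
    rw [hU, hV, ← cge_eq_cntL, ← cge_eq_cntL]; exact (hcnt x).2
  have umem : ∀ i, i < f.natDegree → u i ∈ f.roots := fun i hi =>
    rootList_getD_mem (by rw [rootList_length_rr hfr]; exact hi)
  have vmem : ∀ i, i < g.natDegree → v i ∈ g.roots := fun i hi =>
    rootList_getD_mem (by rw [rootList_length_rr hgr]; exact hi)
  have ueval : ∀ i, i < f.natDegree → f.eval (u i) = 0 := fun i hi =>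
    (Polynomial.mem_roots'.mp (umem i hi)).2
  have veval : ∀ i, i < g.natDegree → g.eval (v i) = 0 := fun i hi =>
    (Polynomial.mem_roots'.mp (vmem i hi)).2
  have unotg : ∀ i, i < f.natDegree → u i ∉ g.roots := fun i hi => hdisj _ (umem i hi)
  have vnotf : ∀ i, i < g.natDegree → v i ∉ f.roots := fun i hi h => hdisj _ h (vmem i hi)
  have pevalu : ∀ i, i < f.natDegree →
      (α • g + β • f).eval (u i) = α * g.eval (u i) := by
    intro i hi
    rw [eval_add, Polynomial.eval_smul, Polynomial.eval_smul, smul_eq_mul, smul_eq_mul,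
      ueval i hi, mul_zero, add_zero]
  have pevalv : ∀ i, i < g.natDegree →
      (α • g + β • f).eval (v i) = β * f.eval (v i) := by
    intro i hi
    rw [eval_add, Polynomial.eval_smul, Polynomial.eval_smul, smul_eq_mul, smul_eq_mul,
      veval i hi, mul_zero, zero_add]
  have evalgsign : ∀ i, i < f.natDegree →
      0 < g.eval (u i) * (-1 : ℝ) ^ (cge g (u i)) := fun i hi =>
    eval_sign hg hgr hlg (unotg i hi)
  have evalfsign : ∀ i, i < g.natDegree →
      0 < f.eval (v i) * (-1 : ℝ) ^ (cge f (v i)) := fun i hi =>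
    eval_sign hf hfr hlf (vnotf i hi)
  rcases (by omega : f.natDegree = g.natDegree ∨ f.natDegree = g.natDegree + 1) with
    hcase | hcase
  · -- equal degree case
    have weak1 : ∀ j, j < f.natDegree → v j ≤ u j := by
      intro j hj
      exact (bridgeA hUs hVs (e := 0) (by omega)).mpr hAx j (by omega)
    have weak2 : ∀ j, j + 1 < f.natDegree → u j ≤ v (j + 1) := by
      intro j hj
      exact (bridgeB hUs hVs (e := 0) (by omega) (by omega)).mpr hBx j (by omega)
    have strict1 : ∀ j, j < f.natDegree → v j < u j := by
      intro j hj
      refine lt_of_le_of_ne (weak1 j hj) (fun h => ?_)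
      exact unotg j hj (h ▸ vmem j (by omega))
    have strict2 : ∀ j, j + 1 < f.natDegree → u j < v (j + 1) := by
      intro j hj
      refine lt_of_le_of_ne (weak2 j hj) (fun h => ?_)
      exact unotg j (by omega) (h ▸ vmem (j + 1) (by omega))
    have hgu : ∀ i, i < f.natDegree → cge g (u i) = f.natDegree - 1 - i := by
      intro i hi
      rw [cge_eq_cntL g (u i), ← hV]
      refine M2 hVs (u i) (c := f.natDegree - 1 - i) (by omega) ?_ ?_
      · intro hc1
        have hidx : V.length - (f.natDegree - 1 - i) = i + 1 := by omega
        rw [hidx]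
        exact le_of_lt (strict2 i (by omega))
      · intro hclt
        have hidx : V.length - (f.natDegree - 1 - i) - 1 = i := by omega
        rw [hidx]
        exact not_le.mpr (strict1 i hi)
    have hfv : ∀ i, i < g.natDegree → cge f (v i) = f.natDegree - i := by
      intro i hi
      rw [cge_eq_cntL f (v i), ← hU]
      refine M2 hUs (v i) (c := f.natDegree - i) (by omega) ?_ ?_
      · intro hc1
        have hidx : U.length - (f.natDegree - i) = i := by omega
        rw [hidx]
        exact le_of_lt (strict1 i (by omega))
      · intro hclt
        have hidx : U.length - (f.natDegree - i) - 1 = i - 1 := by omega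
        rw [hidx]
        have h2 := strict2 (i - 1) (by omega)
        rw [show i - 1 + 1 = i by omega] at h2
        exact not_le.mpr h2
    have prodneg : ∀ i, i < f.natDegree →
        (α • g + β • f).eval (u i) * (α • g + β • f).eval (v i) < 0 := by
      intro i hi
      have hPu : 0 < (α • g + β • f).eval (u i) * (-1 : ℝ) ^ (f.natDegree - 1 - i) := by
        rw [pevalu i hi]
        have := evalgsign i hi
        rw [hgu i hi] at this
        nlinarith
      have hPv : 0 < (α • g + β • f).eval (v i) * (-1 : ℝ) ^ (f.natDegree - 1 - i + 1) := by
        have hexp : f.natDegree - 1 - i + 1 = f.natDegree - i := by omega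
        rw [hexp, pevalv i (by omega)]
        have := evalfsign i (by omega)
        rw [hfv i (by omega)] at this
        nlinarith
      exact sign_flip hPu hPv
    have hex : ∀ i, ∃ c, i < f.natDegree → (v i < c ∧ c < u i ∧ (α • g + β • f).eval c = 0) := by
      intro i
      by_cases hi : i < f.natDegree
      · obtain ⟨c, h1, h2, h3⟩ := ivt_root (strict1 i hi) (by
          have := prodneg i hi; nlinarith)
        exact ⟨c, fun _ => ⟨h1, h2, h3⟩⟩
      · exact ⟨0, fun h => absurd h hi⟩
    choose w hw using hex
    have hstep : ∀ i, i + 1 < f.natDegree → w i < w (i + 1) := by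
      intro i hi
      have h1 := (hw i (by omega)).2.1
      have h2 := (hw (i + 1) (by omega)).1
      have h3 := strict2 i hi
      linarith
    obtain ⟨hprr, hplist⟩ := roots_eq_of_found hpne hpdeg hstep
      (fun i hi => (hw i hi).2.2)
    have hWl : ((List.range f.natDegree).map w).length = f.natDegree := by simp
    have hWs : ((List.range f.natDegree).map w).Pairwise (· ≤ ·) := by
      rw [← hplist]; exact rootList_sorted _
    have hWget : ∀ j, j < f.natDegree → ((List.range f.natDegree).map w).getD j 0 = w j := by
      intro j hj
      rw [List.getD_eq_getElem _ _ (by simpa using hj)]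
      simp
    refine ⟨hprr, hplc, fun x => ?_⟩
    constructor
    · rw [cge_eq_cntL, cge_eq_cntL, hplist, ← hV]
      refine (bridgeA hWs hVs (e := 0) (by omega)).mp ?_ x
      intro j hj
      simp only [Nat.add_zero]
      rw [hWget j (by omega)]
      exact le_of_lt (hw j (by omega)).1
    · rw [cge_eq_cntL, cge_eq_cntL, hplist, ← hU]
      refine (bridgeA hUs hWs (e := 0) (by omega)).mp ?_ x
      intro j hj
      simp only [Nat.add_zero]
      rw [hWget j (by omega)]
      exact le_of_lt (hw j (by omega)).2.1
  · -- degree difference one case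
    have weak3 : ∀ j, j < g.natDegree → u j ≤ v j := by
      intro j hj
      have := (bridgeB hUs hVs (e := 1) (by omega) (by omega)).mpr hBx j (by omega)
      simpa only [Nat.add_sub_cancel] using this
    have weak4 : ∀ j, j < g.natDegree → v j ≤ u (j + 1) := by
      intro j hj
      exact (bridgeA hUs hVs (e := 1) (by omega)).mpr hAx j (by omega)
    have strict3 : ∀ j, j < g.natDegree → u j < v j := by
      intro j hj
      refine lt_of_le_of_ne (weak3 j hj) (fun h => ?_)
      exact unotg j (by omega) (h ▸ vmem j hj)
    have strict4 : ∀ j, j < g.natDegree → v j < u (j + 1) := by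
      intro j hj
      refine lt_of_le_of_ne (weak4 j hj) (fun h => ?_)
      exact unotg (j + 1) (by omega) (h.symm ▸ vmem j hj)
    have hgu : ∀ i, i < f.natDegree → cge g (u i) = g.natDegree - i := by
      intro i hi
      rw [cge_eq_cntL g (u i), ← hV]
      refine M2 hVs (u i) (c := g.natDegree - i) (by omega) ?_ ?_
      · intro hc1
        have hidx : V.length - (g.natDegree - i) = i := by omega
        rw [hidx]
        exact le_of_lt (strict3 i (by omega))
      · intro hclt
        have hidx : V.length - (g.natDegree - i) - 1 = i - 1 := by omega
        rw [hidx]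
        have h2 := strict4 (i - 1) (by omega)
        rw [show i - 1 + 1 = i by omega] at h2
        exact not_le.mpr h2
    have hfv : ∀ i, i < g.natDegree → cge f (v i) = g.natDegree - i := by
      intro i hi
      rw [cge_eq_cntL f (v i), ← hU]
      refine M2 hUs (v i) (c := g.natDegree - i) (by omega) ?_ ?_
      · intro hc1
        have hidx : U.length - (g.natDegree - i) = i + 1 := by omega
        rw [hidx]
        exact le_of_lt (strict4 i (by omega))
      · intro hclt
        have hidx : U.length - (g.natDegree - i) - 1 = i := by omega
        rw [hidx]
        exact not_le.mpr (strict3 i (by omega))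
    have hPu : ∀ i, i < f.natDegree →
        0 < (α • g + β • f).eval (u i) * (-1 : ℝ) ^ (g.natDegree - i) := by
      intro i hi
      rw [pevalu i hi]
      have := evalgsign i hi
      rw [hgu i hi] at this
      nlinarith
    have prodneg : ∀ i, i < g.natDegree →
        (α • g + β • f).eval (u (i + 1)) * (α • g + β • f).eval (v i) < 0 := by
      intro i hi
      have hPu1 := hPu (i + 1) (by omega)
      rw [show g.natDegree - (i + 1) = g.natDegree - i - 1 by omega] at hPu1
      have hPv : 0 < (α • g + β • f).eval (v i) * (-1 : ℝ) ^ (g.natDegree - i - 1 + 1) := by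
        rw [show g.natDegree - i - 1 + 1 = g.natDegree - i by omega, pevalv i hi]
        have := evalfsign i hi
        rw [hfv i hi] at this
        nlinarith
      exact sign_flip hPu1 hPv
    obtain ⟨x₁, hx₁lt, hx₁sign⟩ := exists_low_sign hplc (u 0)
    have hbotneg : (α • g + β • f).eval (u 0) * (α • g + β • f).eval x₁ < 0 := by
      have hPu0 := hPu 0 hnpos
      rw [Nat.sub_zero] at hPu0
      have hx₁' : 0 < (α • g + β • f).eval x₁ * (-1 : ℝ) ^ (g.natDegree + 1) := by
        rwa [hpdeg, hcase] at hx₁sign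
      exact sign_flip hPu0 hx₁'
    have hex : ∀ i, ∃ c, i < f.natDegree →
        ((i = 0 → x₁ < c ∧ c < u 0) ∧ (∀ j, i = j + 1 → v j < c ∧ c < u (j + 1)) ∧
          (α • g + β • f).eval c = 0) := by
      intro i
      match i with
      | 0 =>
          obtain ⟨c, h1, h2, h3⟩ := ivt_root hx₁lt (by nlinarith [hbotneg])
          exact ⟨c, fun _ => ⟨fun _ => ⟨h1, h2⟩, fun j hj => by omega, h3⟩⟩
      | j + 1 =>
          by_cases hj : j < g.natDegree
          · obtain ⟨c, h1, h2, h3⟩ := ivt_root (strict4 j hj) (by nlinarith [prodneg j hj])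
            refine ⟨c, fun _ => ⟨fun h => by omega, fun j' hj' => ?_, h3⟩⟩
            have : j' = j := by omega
            subst this
            exact ⟨h1, h2⟩
          · exact ⟨0, fun h => absurd h (by omega)⟩
    choose w hw using hex
    have hwu : ∀ i, i < f.natDegree → w i < u i := by
      intro i hi
      match i with
      | 0 => exact ((hw 0 hi).1 rfl).2
      | j + 1 => exact ((hw (j + 1) hi).2.1 j rfl).2
    have hstep : ∀ i, i + 1 < f.natDegree → w i < w (i + 1) := by
      intro i hi
      have h1 := hwu i (by omega)
      have h2 := ((hw (i + 1) (by omega)).2.1 i rfl).1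
      have h3 := strict3 i (by omega)
      linarith
    obtain ⟨hprr, hplist⟩ := roots_eq_of_found hpne hpdeg hstep
      (fun i hi => (hw i hi).2.2)
    have hWl : ((List.range f.natDegree).map w).length = f.natDegree := by simp
    have hWs : ((List.range f.natDegree).map w).Pairwise (· ≤ ·) := by
      rw [← hplist]; exact rootList_sorted _
    have hWget : ∀ j, j < f.natDegree → ((List.range f.natDegree).map w).getD j 0 = w j := by
      intro j hj
      rw [List.getD_eq_getElem _ _ (by simpa using hj)]
      simp
    refine ⟨hprr, hplc, fun x => ?_⟩
    constructor
    · rw [cge_eq_cntL, cge_eq_cntL, hplist, ← hV]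
      refine (bridgeA hWs hVs (e := 1) (by omega)).mp ?_ x
      intro j hj
      rw [hWget (j + 1) (by omega)]
      exact le_of_lt ((hw (j + 1) (by omega)).2.1 j rfl).1
    · rw [cge_eq_cntL, cge_eq_cntL, hplist, ← hU]
      refine (bridgeA hUs hWs (e := 0) (by omega)).mp ?_ x
      intro j hj
      simp only [Nat.add_zero]
      rw [hWget j (by omega)]
      exact le_of_lt (hwu j (by omega))

lemma sandwich {f g : Polynomial ℝ} (hf : f ≠ 0) (hg : g ≠ 0)
    (hfr : RealRooted f) (hgr : RealRooted g)
    (hlf : 0 < f.leadingCoeff) (hlg : 0 < g.leadingCoeff)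
    (hcnt : ∀ x, cge g x ≤ cge f x ∧ cge f x ≤ cge g x + 1)
    {α β : ℝ} (hα : 0 ≤ α) (hβ : 0 ≤ β) (hne : α • g + β • f ≠ 0) :
    RealRooted (α • g + β • f) ∧ 0 < (α • g + β • f).leadingCoeff ∧
      ∀ x, cge g x ≤ cge (α • g + β • f) x ∧ cge (α • g + β • f) x ≤ cge f x := by
  rcases eq_or_lt_of_le hα with rfl | hα'
  · -- α = 0
    have hβ' : β ≠ 0 := by
      intro h
      rw [h] at hne
      simp at hne
    simp only [zero_smul, zero_add] at hne ⊢
    refine ⟨?_, ?_, fun x => ?_⟩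
    · rw [RealRooted, Polynomial.roots_smul_nonzero f hβ', Polynomial.smul_eq_C_mul,
        natDegree_C_mul hβ']
      exact hfr
    · rw [Polynomial.smul_eq_C_mul, leadingCoeff_mul, leadingCoeff_C]
      have : 0 < β := lt_of_le_of_ne hβ (Ne.symm hβ')
      nlinarith
    · rw [cge_smul hβ']
      exact ⟨(hcnt x).1, le_refl _⟩
  rcases eq_or_lt_of_le hβ with rfl | hβ'
  · -- β = 0
    have hα'' : α ≠ 0 := ne_of_gt hα'
    simp only [zero_smul, add_zero] at hne ⊢
    refine ⟨?_, ?_, fun x => ?_⟩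
    · rw [RealRooted, Polynomial.roots_smul_nonzero g hα'', Polynomial.smul_eq_C_mul,
        natDegree_C_mul hα'']
      exact hgr
    · rw [Polynomial.smul_eq_C_mul, leadingCoeff_mul, leadingCoeff_C]
      nlinarith
    · rw [cge_smul hα'']
      exact ⟨le_refl _, (hcnt x).1⟩
  -- both positive: peel off common roots
  classical
  set Cm := f.roots ∩ g.roots with hCm
  set h := (Cm.map (fun r => X - Polynomial.C r)).prod with hh
  have hmonic : h.Monic :=
    monic_multiset_prod_of_monic _ _ (fun r _ => monic_X_sub_C r)
  have hne0 : h ≠ 0 := hmonic.ne_zero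
  have hrootsh : h.roots = Cm := roots_multiset_prod_X_sub_C Cm
  have hdegh : h.natDegree = Multiset.card Cm := natDegree_multiset_prod_X_sub_C_eq_card Cm
  have hdvdf : h ∣ f := by
    refine dvd_trans ?_ (prod_multiset_X_sub_C_dvd f)
    exact Multiset.prod_dvd_prod_of_le (Multiset.map_le_map (Multiset.inter_le_left))
  have hdvdg : h ∣ g := by
    refine dvd_trans ?_ (prod_multiset_X_sub_C_dvd g)
    exact Multiset.prod_dvd_prod_of_le (Multiset.map_le_map (Multiset.inter_le_right))
  obtain ⟨f1, hf1⟩ := hdvdf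
  obtain ⟨g1, hg1⟩ := hdvdg
  have hf1ne : f1 ≠ 0 := by rintro rfl; rw [mul_zero] at hf1; exact hf hf1
  have hg1ne : g1 ≠ 0 := by rintro rfl; rw [mul_zero] at hg1; exact hg hg1
  have hfroots : f.roots = Cm + f1.roots := by
    rw [hf1, Polynomial.roots_mul (hf1 ▸ hf), hrootsh]
  have hgroots : g.roots = Cm + g1.roots := by
    rw [hg1, Polynomial.roots_mul (hg1 ▸ hg), hrootsh]
  have hfdeg : f.natDegree = h.natDegree + f1.natDegree := by
    rw [hf1, natDegree_mul hne0 hf1ne]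
  have hgdeg : g.natDegree = h.natDegree + g1.natDegree := by
    rw [hg1, natDegree_mul hne0 hg1ne]
  have hf1rr : RealRooted f1 := by
    rw [RealRooted]
    have h1 : Multiset.card f.roots = Multiset.card Cm + Multiset.card f1.roots := by
      rw [hfroots, Multiset.card_add]
    have h2 := f1.card_roots'
    have h3 : Multiset.card f.roots = f.natDegree := hfr
    omega
  have hg1rr : RealRooted g1 := by
    rw [RealRooted]
    have h1 : Multiset.card g.roots = Multiset.card Cm + Multiset.card g1.roots := by
      rw [hgroots, Multiset.card_add]
    have h2 := g1.card_roots'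
    have h3 : Multiset.card g.roots = g.natDegree := hgr
    omega
  have hf1lc : 0 < f1.leadingCoeff := by
    have heq : f.leadingCoeff = f1.leadingCoeff := by
      rw [hf1, leadingCoeff_mul, hmonic.leadingCoeff, one_mul]
    exact heq ▸ hlf
  have hg1lc : 0 < g1.leadingCoeff := by
    have heq : g.leadingCoeff = g1.leadingCoeff := by
      rw [hg1, leadingCoeff_mul, hmonic.leadingCoeff, one_mul]
    exact heq ▸ hlg
  have hcgef : ∀ x, cge f x = cge h x + cge f1 x := fun x => by
    rw [hf1]; exact cge_mul hne0 hf1ne x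
  have hcgeg : ∀ x, cge g x = cge h x + cge g1 x := fun x => by
    rw [hg1]; exact cge_mul hne0 hg1ne x
  have hcnt1 : ∀ x, cge g1 x ≤ cge f1 x ∧ cge f1 x ≤ cge g1 x + 1 := by
    intro x
    have h1 := (hcnt x).1
    have h2 := (hcnt x).2
    rw [hcgef x, hcgeg x] at h1 h2
    omega
  have hdisj1 : ∀ r, r ∈ f1.roots → r ∉ g1.roots := by
    intro r hrf hrg
    have hcf1 : Multiset.count r f.roots = Multiset.count r Cm + Multiset.count r f1.roots := by
      rw [hfroots, Multiset.count_add]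
    have hcg1 : Multiset.count r g.roots = Multiset.count r Cm + Multiset.count r g1.roots := by
      rw [hgroots, Multiset.count_add]
    have hcC : Multiset.count r Cm = min (Multiset.count r f.roots) (Multiset.count r g.roots) := by
      rw [hCm, Multiset.count_inter]
    have hf' : 0 < Multiset.count r f1.roots := Multiset.count_pos.mpr hrf
    have hg' : 0 < Multiset.count r g1.roots := Multiset.count_pos.mpr hrg
    omega
  have hcombo : α • g + β • f = h * (α • g1 + β • f1) := by
    rw [hf1, hg1, mul_add, mul_smul_comm, mul_smul_comm]
  have hp1ne : α • g1 + β • f1 ≠ 0 := by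
    intro hzero
    rw [hcombo, hzero, mul_zero] at hne
    exact hne rfl
  obtain ⟨hp1rr, hp1lc, hp1cnt⟩ :=
    sandwich_coprime hf1ne hg1ne hf1rr hg1rr hf1lc hg1lc hcnt1 hdisj1 hα' hβ'
  have hpne : α • g + β • f ≠ 0 := hne
  have hpdeg : (α • g + β • f).natDegree = h.natDegree + (α • g1 + β • f1).natDegree := by
    rw [hcombo, natDegree_mul hne0 hp1ne]
  have hproots : (α • g + β • f).roots = Cm + (α • g1 + β • f1).roots := by
    rw [hcombo, Polynomial.roots_mul (hcombo ▸ hne), hrootsh]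
  have hcgep : ∀ x, cge (α • g + β • f) x = cge h x + cge (α • g1 + β • f1) x := fun x => by
    rw [hcombo]; exact cge_mul hne0 hp1ne x
  refine ⟨?_, ?_, fun x => ?_⟩
  · rw [RealRooted, hproots, Multiset.card_add, hpdeg]
    have : Multiset.card (α • g1 + β • f1).roots = (α • g1 + β • f1).natDegree := hp1rr
    omega
  · have heq : (α • g + β • f).leadingCoeff = (α • g1 + β • f1).leadingCoeff := by
      rw [hcombo, leadingCoeff_mul, hmonic.leadingCoeff, one_mul]
    exact heq ▸ hp1lc
  · have h1 := (hp1cnt x).1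
    have h2 := (hp1cnt x).2
    rw [hcgef x, hcgeg x, hcgep x]
    omega

lemma realrooted_smul {φ : Polynomial ℝ} {s : ℝ} (hs : s ≠ 0) (hrr : RealRooted φ) :
    RealRooted (s • φ) := by
  rw [RealRooted, Polynomial.roots_smul_nonzero φ hs, Polynomial.smul_eq_C_mul,
    natDegree_C_mul hs]
  exact hrr

lemma lc_smul_pos {φ : Polynomial ℝ} {s : ℝ} (hs : 0 < s) (hlc : 0 < φ.leadingCoeff) :
    0 < (s • φ).leadingCoeff := by
  rw [Polynomial.smul_eq_C_mul, leadingCoeff_mul, leadingCoeff_C]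
  nlinarith

lemma CInt_smul_smul {φ : Polynomial ℝ} (hrr : RealRooted φ)
    (hlc : 0 < φ.leadingCoeff) {s t : ℝ} (hs : 0 < s) (ht : 0 < t) :
    CInt (s • φ) (t • φ) := by
  refine ⟨realrooted_smul (ne_of_gt ht) hrr, realrooted_smul (ne_of_gt hs) hrr,
    lc_smul_pos ht hlc, lc_smul_pos hs hlc, fun x => ?_⟩
  rw [cge_smul (ne_of_gt hs), cge_smul (ne_of_gt ht)]
  omega


/-- if `a, b, c, d ≥ 0` with `ad ≥ bc` and `g ≼ f` for real-rooted
polynomials `f, g` with nonnegative coefficients, then `a·g + b·f ≼ c·g + d·f`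
provided both are nonzero. -/
theorem stmt4 (a b c d : ℝ) (ha : 0 ≤ a) (hb : 0 ≤ b) (hc : 0 ≤ c) (hd : 0 ≤ d)
    (hdet : b * c ≤ a * d) (f g : Polynomial ℝ)
    (hfrr : RealRooted f) (hgrr : RealRooted g)
    (hfnn : NonnegCoeffs f) (hgnn : NonnegCoeffs g)
    (hint : Interlaces g f)
    (h1 : a • g + b • f ≠ 0) (h2 : c • g + d • f ≠ 0) :
    Interlaces (a • g + b • f) (c • g + d • f) := by
  by_cases hf0 : f = 0
  · subst hf0
    simp only [smul_zero, add_zero] at h1 h2 ⊢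
    have hg0 : g ≠ 0 := by rintro rfl; simp at h1
    have ha' : a ≠ 0 := by rintro rfl; simp at h1
    have hc' : c ≠ 0 := by rintro rfl; simp at h2
    have hlg : 0 < g.leadingCoeff := lt_of_le_of_ne (hgnn _)
      (Ne.symm (Polynomial.leadingCoeff_ne_zero.mpr hg0))
    exact (bridge (smul_ne_zero hc' hg0) (smul_ne_zero ha' hg0)).mpr
      (CInt_smul_smul hgrr hlg (lt_of_le_of_ne ha (Ne.symm ha'))
        (lt_of_le_of_ne hc (Ne.symm hc')))
  by_cases hg0 : g = 0
  · subst hg0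
    simp only [smul_zero, zero_add] at h1 h2 ⊢
    have hb' : b ≠ 0 := by rintro rfl; simp at h1
    have hd' : d ≠ 0 := by rintro rfl; simp at h2
    have hlf : 0 < f.leadingCoeff := lt_of_le_of_ne (hfnn _)
      (Ne.symm (Polynomial.leadingCoeff_ne_zero.mpr hf0))
    exact (bridge (smul_ne_zero hd' hf0) (smul_ne_zero hb' hf0)).mpr
      (CInt_smul_smul hfrr hlf (lt_of_le_of_ne hb (Ne.symm hb'))
        (lt_of_le_of_ne hd (Ne.symm hd')))
  obtain ⟨hfr, hgr, hlf, hlg, hcnt⟩ := (bridge hf0 hg0).mp hint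
  rcases eq_or_lt_of_le ha with rfl | ha'
  · -- a = 0 : then c = 0, p = b•f, q = d•f
    have hb' : b ≠ 0 := by rintro rfl; simp at h1
    have hc0 : c = 0 := by nlinarith [lt_of_le_of_ne hb (Ne.symm hb')]
    subst hc0
    have hd' : d ≠ 0 := by rintro rfl; simp at h2
    simp only [zero_smul, zero_add] at h1 h2 ⊢
    exact (bridge (smul_ne_zero hd' hf0) (smul_ne_zero hb' hf0)).mpr
      (CInt_smul_smul hfr hlf (lt_of_le_of_ne hb (Ne.symm hb'))
        (lt_of_le_of_ne hd (Ne.symm hd')))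
  rcases eq_or_lt_of_le hd with rfl | hd'
  · -- d = 0 : then b = 0 or c = 0; c = 0 impossible, so b = 0, q = c•g, p = a•g
    have hc' : c ≠ 0 := by rintro rfl; simp at h2
    have hb0 : b = 0 := by nlinarith [lt_of_le_of_ne hc (Ne.symm hc')]
    subst hb0
    simp only [zero_smul, add_zero, smul_zero] at h1 h2 ⊢
    exact (bridge (smul_ne_zero hc' hg0) (smul_ne_zero (ne_of_gt ha') hg0)).mpr
      (CInt_smul_smul hgr hlg ha' (lt_of_le_of_ne hc (Ne.symm hc')))
  -- main case : a > 0, d > 0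
  obtain ⟨hprr, hplc, hpcnt⟩ := sandwich hf0 hg0 hfr hgr hlf hlg hcnt ha hb h1
  have hcntpf : ∀ x, cge (a • g + b • f) x ≤ cge f x ∧
      cge f x ≤ cge (a • g + b • f) x + 1 := by
    intro x
    have h3 := (hpcnt x).1
    have h4 := (hpcnt x).2
    have h5 := (hcnt x).2
    omega
  have qeq : c • g + d • f = (c / a) • (a • g + b • f) + ((a * d - b * c) / a) • f := by
    have e1 : (c / a) * a = c := by field_simp
    have e2 : (c / a) * b + (a * d - b * c) / a = d := by field_simp; ring
    rw [smul_add, smul_smul, smul_smul, add_assoc, ← add_smul, e1, e2]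
  obtain ⟨hqrr, hqlc, hqcnt⟩ := sandwich (α := c / a) (β := (a * d - b * c) / a)
    hf0 h1 hfr hprr hlf hplc hcntpf
    (div_nonneg hc (le_of_lt ha')) (div_nonneg (by linarith) (le_of_lt ha'))
    (by rw [← qeq]; exact h2)
  rw [← qeq] at hqrr hqlc hqcnt
  refine (bridge h2 h1).mpr ⟨hqrr, hprr, hqlc, hplc, fun x => ?_⟩
  have h3 := (hqcnt x).1
  have h4 := (hqcnt x).2
  have h5 := (hcnt x).2
  have h6 := (hpcnt x).1
  omega
end
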